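/- arXiv:1611.04014 — 2 statements merged into one kernel-verified Lean document; each statement's English description precedes it below -/
import Mathlib

section
/- Let u, v be permutations of [n] with inverses s = u⁻¹, t = v⁻¹. Then u is super-strongly Wilf equivalent to v if and only if Δᵢ(s) = Δᵢ(t) for every i ∈ [2, n−1], where Δᵢ(s) is the vector of consecutive differences of the sorted set of positions {s_i, s_{i+1}, …, s_n}. -/
abbrev Word := List ℕ+

/-- Height (letter-sum) of a word. -/
def ht (w : Word) : ℕ := (w.map (fun x => (x : ℕ))).sum

/-- Embedding index set of `u` into `w` (1-based positions). -/
def Em (u w : Word) : Set ℕ :=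
  {j | 1 ≤ j ∧ j - 1 + u.length ≤ w.length ∧
    ∀ k, k < u.length → u.getD k 1 ≤ w.getD (j - 1 + k) 1}

/-- Super-strong Wilf equivalence. -/
def SSWilf (u v : Word) : Prop :=
  ∃ f : Word → Word, Function.Bijective f ∧
    (∀ w, (f w).length = w.length ∧ ht (f w) = ht w) ∧
    (∀ w, Em u w = Em v (f w))

/-- `w` is a permutation of `[n]`. -/
def IsPerm (n : ℕ) (w : Word) : Prop :=
  w.length = n ∧ ∀ k : ℕ, 1 ≤ k → k ≤ n → (w.map (fun x => (x : ℕ))).count k = 1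

/-- 1-based position of the letter `k` in `u`. -/
def pos (u : Word) (k : ℕ) : ℕ := (u.map (fun x => (x : ℕ))).idxOf k + 1

/-- `E` is an embedding set satisfying the overlap condition for words of length `n`. -/
def IsEmbSet (n : ℕ) (E : Finset ℕ) : Prop :=
  1 ∈ E ∧ (∀ a ∈ E, 1 ≤ a) ∧
  ∀ a ∈ E, (∀ b ∈ E, b ≤ a) ∨ ∃ b ∈ E, a < b ∧ b ≤ a + (n - 1)

/-- The letter at (1-based) position `p` of the (pre-)cluster of `u` on `E`. -/
def clusterAt (u : Word) (E : Finset ℕ) (p : ℕ) : ℕ+ :=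
  (E.sup (fun a => if a ≤ p ∧ p < a + u.length then ((u.getD (p - a) 1 : ℕ+) : ℕ) else 1)).toPNat'

/-- The minimal cluster of `u` with embedding set `E`. -/
def mcluster (u : Word) (E : Finset ℕ) : Word :=
  (List.range (E.sup id - 1 + u.length)).map (fun j => clusterAt u E (j + 1))

/-- The extended minimal cluster of `u` on `E` with prescribed length `n`. -/
def extCluster (u : Word) (E : Finset ℕ) (n : ℕ) : Word :=
  (List.range n).map (fun j => clusterAt u E (j + 1))

/-- The multiset `i⁺(u)` of distances from the letter `i` to larger letters. -/
def iplus (n : ℕ) (u : Word) (i : ℕ) : Multiset ℕ :=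
  (Multiset.Icc (i + 1) n).map (fun j => Nat.dist (pos u i) (pos u j))

/-- Cross equivalence of permutations of `[n]`. -/
def CrossEq (n : ℕ) (u v : Word) : Prop :=
  ∀ i, 1 ≤ i → i ≤ n - 1 → iplus n u i = iplus n v i

/-- Increasing list of (1-based) positions in `u` of the letters `≥ i`. -/
def posList (u : Word) (i : ℕ) : List ℕ :=
  ((List.range u.length).filter (fun k => i ≤ ((u.getD k 1 : ℕ+) : ℕ))).map (· + 1)

/-- `Δᵢ(u⁻¹)`: consecutive differences of positions of letters `≥ i` in `u`. -/
def Delta (u : Word) (i : ℕ) : List ℕ :=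
  List.zipWith (fun a b => b - a) (posList u i) (posList u i).tail

/-- Shift `(p-1) + E` of an embedding set. -/
def shiftSet (p : ℕ) (E : Finset ℕ) : Finset ℕ := E.image (fun e => p - 1 + e)

open Finset

/-! ### Perm basics -/



lemma mapcoe (u : Word) : (u.map (fun x => (x : ℕ))) = List.map PNat.val u := by
  induction u with
  | nil => rfl
  | cons a l ih => simpa using ih

lemma isPerm_multiset {n : ℕ} {u : Word} (hu : IsPerm n u) :
    (↑(u.map PNat.val) : Multiset ℕ) = (Finset.Icc 1 n).val := by
  obtain ⟨hlen, hcount⟩ := hu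
  simp only [mapcoe] at hcount
  set L : List ℕ := u.map PNat.val with hL
  have hcard : Multiset.card (↑L : Multiset ℕ) = n := by
    rw [Multiset.coe_card, hL, List.length_map, hlen]
  have hsub : Finset.Icc 1 n ⊆ (↑L : Multiset ℕ).toFinset := by
    intro k hk
    rw [Finset.mem_Icc] at hk
    rw [Multiset.mem_toFinset, ← Multiset.count_pos, Multiset.coe_count, hcount k hk.1 hk.2]
    norm_num
  ext k
  rw [Multiset.coe_count]
  by_cases hk : k ∈ Finset.Icc 1 n
  · rw [Finset.mem_Icc] at hk
    rw [hcount k hk.1 hk.2]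
    exact (Multiset.count_eq_one_of_mem (Finset.Icc 1 n).nodup
      (by rw [← Finset.mem_def]; exact Finset.mem_Icc.mpr hk)).symm
  · have h0 : (Finset.Icc 1 n).val.count k = 0 := by
      rw [Multiset.count_eq_zero, ← Finset.mem_def]
      exact hk
    rw [h0, List.count_eq_zero]
    intro hmem
    have hsub2 : insert k (Finset.Icc 1 n) ⊆ (↑L : Multiset ℕ).toFinset := by
      intro x hx
      rcases Finset.mem_insert.mp hx with rfl | hx
      · rw [Multiset.mem_toFinset, Multiset.mem_coe]; exact hmem
      · exact hsub hx
    have h1 : (insert k (Finset.Icc 1 n)).card ≤ (↑L : Multiset ℕ).toFinset.card :=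
      Finset.card_le_card hsub2
    have h2 : (↑L : Multiset ℕ).toFinset.card ≤ Multiset.card (↑L : Multiset ℕ) :=
      Multiset.toFinset_card_le _
    rw [Finset.card_insert_of_notMem hk] at h1
    simp only [Nat.card_Icc] at h1
    omega

lemma isPerm_mem_iff {n : ℕ} {u : Word} (hu : IsPerm n u) {x : ℕ} :
    x ∈ u.map PNat.val ↔ 1 ≤ x ∧ x ≤ n := by
  have h := isPerm_multiset hu
  rw [← Multiset.mem_coe, h, ← Finset.mem_def, Finset.mem_Icc]

lemma isPerm_nodup {n : ℕ} {u : Word} (hu : IsPerm n u) :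
    (u.map PNat.val).Nodup := by
  have h := isPerm_multiset hu
  have h2 : (↑(u.map PNat.val) : Multiset ℕ).Nodup := by
    rw [h]; exact (Finset.Icc 1 n).nodup
  exact Multiset.coe_nodup.mp h2

lemma isPerm_getD_mem {n : ℕ} {u : Word} (hu : IsPerm n u) {k : ℕ} (hk : k < u.length) :
    1 ≤ ((u.getD k 1 : ℕ+) : ℕ) ∧ ((u.getD k 1 : ℕ+) : ℕ) ≤ n := by
  rw [← isPerm_mem_iff hu]
  have h : u.getD k 1 ∈ u := by
    rw [List.getD_eq_getElem u 1 hk]; exact List.getElem_mem _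
  exact List.mem_map_of_mem (f := PNat.val) h

/-! ### Position lists and sets -/

def PL (u : Word) (i : ℕ) : List ℕ :=
  (List.range u.length).filter (fun k => i ≤ ((u.getD k 1 : ℕ+) : ℕ))

lemma posList_eq (u : Word) (i : ℕ) : posList u i = (PL u i).map (· + 1) := rfl

lemma mem_PL {u : Word} {i k : ℕ} :
    k ∈ PL u i ↔ k < u.length ∧ i ≤ ((u.getD k 1 : ℕ+) : ℕ) := by
  simp [PL, List.mem_filter, List.mem_range]

lemma PL_sorted (u : Word) (i : ℕ) : (PL u i).Pairwise (· < ·) :=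
  List.pairwise_lt_range.filter _

lemma PL_nodup (u : Word) (i : ℕ) : (PL u i).Nodup :=
  List.nodup_range.filter _

def Pset (u : Word) (i : ℕ) : Finset ℕ := (PL u i).toFinset

def Zset (u : Word) (i : ℕ) : Finset ℤ := (Pset u i).image (fun k => (Int.ofNat k))

lemma mem_Pset {u : Word} {i k : ℕ} :
    k ∈ Pset u i ↔ k < u.length ∧ i ≤ ((u.getD k 1 : ℕ+) : ℕ) := by
  rw [Pset, List.mem_toFinset, mem_PL]

lemma mem_Zset {u : Word} {i : ℕ} {z : ℤ} :
    z ∈ Zset u i ↔ ∃ k : ℕ, (k < u.length ∧ i ≤ ((u.getD k 1 : ℕ+) : ℕ)) ∧ (k : ℤ) = z := by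
  simp [Zset, Finset.mem_image, mem_Pset]

lemma card_Pset {n : ℕ} {u : Word} (hu : IsPerm n u) {i : ℕ} (hi : 1 ≤ i) :
    (Pset u i).card = n + 1 - i := by
  have hlen := hu.1
  have hnd := isPerm_nodup hu
  rw [show n + 1 - i = (Finset.Icc i n).card by rw [Nat.card_Icc]]
  apply Finset.card_bij (fun k _ => ((u.getD k 1 : ℕ+) : ℕ))
  · intro k hk
    rw [mem_Pset] at hk
    rw [Finset.mem_Icc]
    exact ⟨hk.2, (isPerm_getD_mem hu hk.1).2⟩
  · intro k1 hk1 k2 hk2 he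
    rw [mem_Pset] at hk1 hk2
    have h1 : (u.map PNat.val).get ⟨k1, by simpa using hk1.1⟩
        = (u.map PNat.val).get ⟨k2, by simpa using hk2.1⟩ := by
      simp only [List.get_eq_getElem, List.getElem_map]
      rw [← List.getD_eq_getElem u 1 hk1.1, ← List.getD_eq_getElem u 1 hk2.1]
      exact he
    have := (List.Nodup.get_inj_iff hnd).mp h1
    simpa using this
  · intro x hx
    rw [Finset.mem_Icc] at hx
    have hmem : x ∈ u.map PNat.val := (isPerm_mem_iff hu).mpr ⟨le_trans hi hx.1, hx.2⟩
    rw [List.mem_iff_get] at hmem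
    obtain ⟨⟨k, hk⟩, hget⟩ := hmem
    have hk' : k < u.length := by simpa using hk
    refine ⟨k, ?_, ?_⟩
    · rw [mem_Pset]
      constructor
      · exact hk'
      · rw [show ((u.getD k 1 : ℕ+) : ℕ) = x from ?_]
        · exact hx.1
        · rw [List.getD_eq_getElem u 1 hk']
          simpa using hget
    · rw [List.getD_eq_getElem u 1 hk']
      simpa using hget

lemma card_Zset {n : ℕ} {u : Word} (hu : IsPerm n u) {i : ℕ} (hi : 1 ≤ i) :
    (Zset u i).card = n + 1 - i := by
  rw [Zset, Finset.card_image_of_injective _ (fun a b h => Int.ofNat.inj h)]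
  exact card_Pset hu hi

lemma Zset_nonneg {u : Word} {i : ℕ} {z : ℤ} (hz : z ∈ Zset u i) : 0 ≤ z := by
  rw [mem_Zset] at hz
  obtain ⟨k, _, rfl⟩ := hz
  exact Int.ofNat_nonneg k

lemma Zset_lt {u : Word} {i : ℕ} {z : ℤ} (hz : z ∈ Zset u i) : z < (u.length : ℤ) := by
  rw [mem_Zset] at hz
  obtain ⟨k, hk, rfl⟩ := hz
  exact_mod_cast hk.1

/-! ### Sorted difference lists -/

lemma listToFinset_map {α β : Type*} [DecidableEq α] [DecidableEq β] (l : List α) (f : α → β) :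
    (l.map f).toFinset = l.toFinset.image f := by
  ext x; simp

def diffs (L : List ℕ) : List ℕ := List.zipWith (fun a b => b - a) L L.tail

lemma Delta_eq_diffs (u : Word) (i : ℕ) : Delta u i = diffs (PL u i) := by
  show List.zipWith (fun a b => b - a) (posList u i) (posList u i).tail = _
  rw [posList_eq]
  rw [show ((PL u i).map (· + 1)).tail = (PL u i).tail.map (· + 1) from (List.map_tail).symm]
  rw [List.zipWith_map]
  congr 1
  funext a b
  omega

lemma diffs_eq_iff_exists_shift : ∀ {L M : List ℕ}, L.Pairwise (· < ·) → M.Pairwise (· < ·) →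
    L.length = M.length →
    (diffs L = diffs M ↔
      ∃ c : ℤ, M.map (fun k => Int.ofNat k) = L.map (fun k => Int.ofNat k + c)) := by
  intro L
  induction L with
  | nil =>
    intro M _ _ hlen
    have : M = [] := by
      cases M with
      | nil => rfl
      | cons b M' => simp at hlen
    subst this
    constructor
    · intro _; exact ⟨0, by simp⟩
    · intro _; rfl
  | cons a L ih =>
    intro M hLs hMs hlen
    cases M with
    | nil => simp at hlen
    | cons b M' =>
      cases L with
      | nil =>
        have : M' = [] := by
          cases M' with
          | nil => rfl
          | cons b' M'' => simp at hlen
        subst this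
        constructor
        · intro _
          exact ⟨(Int.ofNat b) - (Int.ofNat a), by simp⟩
        · intro _; rfl
      | cons a' L'' =>
        cases M' with
        | nil => simp at hlen
        | cons b' M'' =>
          have hlen' : (a' :: L'').length = (b' :: M'').length := by simpa using hlen
          have hLs' : (a' :: L'').Pairwise (· < ·) := hLs.tail
          have hMs' : (b' :: M'').Pairwise (· < ·) := hMs.tail
          have haa' : a < a' := (List.pairwise_cons.mp hLs).1 a' (by simp)
          have hbb' : b < b' := (List.pairwise_cons.mp hMs).1 b' (by simp)
          have key := ih hLs' hMs' hlen'
          have hdL : diffs (a :: a' :: L'') = (a' - a) :: diffs (a' :: L'') := rfl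
          have hdM : diffs (b :: b' :: M'') = (b' - b) :: diffs (b' :: M'') := rfl
          rw [hdL, hdM]
          constructor
          · intro h
            have h1 : a' - a = b' - b := (List.cons.injEq _ _ _ _ ▸ h).1
            have h2 := (List.cons.injEq _ _ _ _ ▸ h).2
            obtain ⟨c, hc⟩ := key.mp h2
            simp only [List.map_cons, List.cons.injEq] at hc
            obtain ⟨hb'c, htc⟩ := hc
            refine ⟨c, ?_⟩
            simp only [List.map_cons, List.cons.injEq]
            refine ⟨?_, hb'c, htc⟩
            simp only [Int.ofNat_eq_coe] at hb'c ⊢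
            omega
          · rintro ⟨c, hc⟩
            simp only [List.map_cons, List.cons.injEq] at hc
            obtain ⟨hb, hb'c, htc⟩ := hc
            have h2 : diffs (a' :: L'') = diffs (b' :: M'') :=
              key.mpr ⟨c, by simp only [List.map_cons, List.cons.injEq]; exact ⟨hb'c, htc⟩⟩
            rw [h2]
            congr 1
            simp only [Int.ofNat_eq_coe] at hb hb'c
            omega

lemma PL_length {n : ℕ} {u : Word} (hu : IsPerm n u) {i : ℕ} (hi : 1 ≤ i) :
    (PL u i).length = n + 1 - i := by
  have h := card_Pset hu hi (u := u)
  rwa [Pset, List.toFinset_card_of_nodup (PL_nodup u i)] at h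

lemma translate_iff {n : ℕ} {u v : Word} (hu : IsPerm n u) (hv : IsPerm n v) {i : ℕ}
    (hi : 1 ≤ i) :
    Delta u i = Delta v i ↔
      ∃ c : ℤ, Zset v i = (Zset u i).image (fun z => z + c) := by
  have hlen : (PL u i).length = (PL v i).length := by
    rw [PL_length hu hi, PL_length hv hi]
  have htfu : ((PL u i).map (fun k => Int.ofNat k)).toFinset = Zset u i := by
    rw [listToFinset_map, Zset, Pset]
  have htfv : ((PL v i).map (fun k => Int.ofNat k)).toFinset = Zset v i := by
    rw [listToFinset_map, Zset, Pset]
  have hcomp : ∀ L : List ℕ, ∀ c : ℤ, L.map (fun k => Int.ofNat k + c)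
      = (L.map (fun k => Int.ofNat k)).map (fun z => z + c) := by
    intro L c; rw [List.map_map]; rfl
  rw [Delta_eq_diffs, Delta_eq_diffs,
    diffs_eq_iff_exists_shift (PL_sorted u i) (PL_sorted v i) hlen]
  constructor
  · rintro ⟨c, hc⟩
    refine ⟨c, ?_⟩
    have h2 := congrArg List.toFinset hc
    rw [htfv, hcomp, listToFinset_map, htfu] at h2
    exact h2
  · rintro ⟨c, hc⟩
    refine ⟨c, ?_⟩
    refine (fun hp hs1 hs2 => List.Perm.eq_of_pairwise (le := (· < ·))
      (fun _ _ _ _ h1 h2 => absurd (h1.trans h2) (lt_irrefl _)) hs1 hs2 hp) ?_ ?_ ?_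
    · apply List.perm_of_nodup_nodup_toFinset_eq
      · exact (PL_nodup v i).map (fun x y h => by exact Int.ofNat.inj h)
      · apply (PL_nodup u i).map
        intro x y h
        have h2 : Int.ofNat x = Int.ofNat y := by
          simp only [Int.ofNat_eq_coe] at h ⊢; omega
        exact Int.ofNat.inj h2
      · rw [htfv, hc, hcomp, listToFinset_map, htfu]
    · rw [List.pairwise_map]
      refine (PL_sorted v i).imp (fun h => ?_)
      simp only [Int.ofNat_eq_coe]
      omega
    · rw [List.pairwise_map]
      refine (PL_sorted u i).imp (fun h => ?_)
      simp only [Int.ofNat_eq_coe]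
      omega

/-! ### Clusters and embeddings -/

lemma length_extCluster (u : Word) (E : Finset ℕ) (m : ℕ) :
    (extCluster u E m).length = m := by simp [extCluster]

lemma getD_extCluster (u : Word) (E : Finset ℕ) {m p : ℕ} (hp : p < m) :
    (extCluster u E m).getD p 1 = clusterAt u E (p + 1) := by
  rw [extCluster, List.getD_eq_getElem _ 1 (by simpa using hp)]
  simp

lemma le_clusterAt_iff {u : Word} {E : Finset ℕ} {p i : ℕ} (hi : 2 ≤ i) :
    i ≤ ((clusterAt u E p : ℕ+) : ℕ) ↔
      ∃ a ∈ E, a ≤ p ∧ p < a + u.length ∧ i ≤ ((u.getD (p - a) 1 : ℕ+) : ℕ) := by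
  rw [clusterAt, Nat.toPNat'_coe]
  set f : ℕ → ℕ := fun a => if a ≤ p ∧ p < a + u.length then ((u.getD (p - a) 1 : ℕ+) : ℕ) else 1
    with hf
  constructor
  · intro h
    split_ifs at h with h0
    · -- i ≤ E.sup f
      by_contra hcon
      push_neg at hcon
      have hlt : E.sup f < i := by
        rw [Finset.sup_lt_iff (show (⊥ : ℕ) < i by exact lt_of_lt_of_le (by norm_num) hi)]
        intro a ha
        show (if a ≤ p ∧ p < a + u.length then ((u.getD (p - a) 1 : ℕ+) : ℕ) else 1) < i
        split_ifs with h1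
        · exact hcon a ha h1.1 h1.2
        · omega
      omega
    · omega
  · rintro ⟨a, ha, h1, h2, h3⟩
    have hfa : f a = ((u.getD (p - a) 1 : ℕ+) : ℕ) := by rw [hf]; simp [h1, h2]
    have : i ≤ E.sup f := le_trans h3 (hfa ▸ Finset.le_sup ha)
    split_ifs with h0
    · exact this
    · omega

lemma clusterAt_le {n : ℕ} {u : Word} (hn : 1 ≤ n)
    (hub : ∀ k < u.length, ((u.getD k 1 : ℕ+) : ℕ) ≤ n) (E : Finset ℕ) (p : ℕ) :
    ((clusterAt u E p : ℕ+) : ℕ) ≤ n := by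
  rw [clusterAt, Nat.toPNat'_coe]
  have hs : E.sup (fun a => if a ≤ p ∧ p < a + u.length
      then ((u.getD (p - a) 1 : ℕ+) : ℕ) else 1) ≤ n := by
    apply Finset.sup_le
    intro a _
    split_ifs with h1
    · exact hub _ (by omega)
    · omega
  split_ifs <;> omega

lemma clusterAt_le_getD {u w : Word} {E : Finset ℕ} {p : ℕ}
    (h : ∀ a ∈ E, a ≤ p + 1 → p + 1 < a + u.length →
      u.getD (p + 1 - a) 1 ≤ w.getD p 1) :
    clusterAt u E (p + 1) ≤ w.getD p 1 := by
  rw [← PNat.coe_le_coe, clusterAt, Nat.toPNat'_coe]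
  have hs : E.sup (fun a => if a ≤ p + 1 ∧ p + 1 < a + u.length
      then ((u.getD (p + 1 - a) 1 : ℕ+) : ℕ) else 1) ≤ ((w.getD p 1 : ℕ+) : ℕ) := by
    apply Finset.sup_le
    intro a ha
    split_ifs with h1
    · exact_mod_cast h a ha h1.1 h1.2
    · exact (w.getD p 1).one_le
  have h1 : 1 ≤ ((w.getD p 1 : ℕ+) : ℕ) := (w.getD p 1).one_le
  split_ifs <;> omega

/-- The finite embedding set. -/
def EmF (u w : Word) : Finset ℕ :=
  (Finset.Icc 1 (w.length + 1 - u.length)).filter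
    (fun j => j - 1 + u.length ≤ w.length ∧ ∀ k < u.length, u.getD k 1 ≤ w.getD (j - 1 + k) 1)

lemma mem_EmF {u w : Word} {j : ℕ} : j ∈ EmF u w ↔ j ∈ Em u w := by
  rw [EmF, Finset.mem_filter, Finset.mem_Icc]
  constructor
  · rintro ⟨⟨h1, _⟩, h2, h3⟩
    exact ⟨h1, h2, h3⟩
  · rintro ⟨h1, h2, h3⟩
    exact ⟨⟨h1, by omega⟩, h2, h3⟩

lemma coe_EmF (u w : Word) : (↑(EmF u w) : Set ℕ) = Em u w := by
  ext j
  rw [Finset.mem_coe, mem_EmF]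

/-- Embedding of every element of `E` implies pointwise domination by the cluster. -/
lemma dom_of_subset_Em {u w : Word} {E : Finset ℕ} {m : ℕ} (hm : w.length = m)
    (hE : ∀ j ∈ E, j ∈ Em u w) {p : ℕ} (hp : p < m) :
    (extCluster u E m).getD p 1 ≤ w.getD p 1 := by
  rw [getD_extCluster u E hp]
  apply clusterAt_le_getD
  intro a ha h1 h2
  obtain ⟨ha1, ha2, ha3⟩ := hE a ha
  have hk : p + 1 - a < u.length := by omega
  have := ha3 (p + 1 - a) hk
  rwa [show a - 1 + (p + 1 - a) = p by omega] at this

/-- Pointwise domination by the cluster implies embeddings at all points of `E`. -/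
lemma subset_Em_of_dom {u w : Word} {E : Finset ℕ} {m : ℕ} (hm : w.length = m)
    (hval : ∀ a ∈ E, 1 ≤ a ∧ a - 1 + u.length ≤ m)
    (hdom : ∀ p < m, (extCluster u E m).getD p 1 ≤ w.getD p 1) :
    ∀ j ∈ E, j ∈ Em u w := by
  intro j hj
  obtain ⟨hj1, hj2⟩ := hval j hj
  refine ⟨hj1, by omega, ?_⟩
  intro k hk
  have hp : j - 1 + k < m := by omega
  refine le_trans ?_ (hdom (j - 1 + k) hp)
  rw [getD_extCluster u E hp]
  rw [← PNat.coe_le_coe, clusterAt, Nat.toPNat'_coe]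
  set f : ℕ → ℕ := fun a => if a ≤ j - 1 + k + 1 ∧ j - 1 + k + 1 < a + u.length
    then ((u.getD (j - 1 + k + 1 - a) 1 : ℕ+) : ℕ) else 1 with hf
  have hfj : ((u.getD k 1 : ℕ+) : ℕ) = f j := by
    have h1 : j ≤ j - 1 + k + 1 := by omega
    have h2 : j - 1 + k + 1 < j + u.length := by omega
    simp only [hf]
    rw [if_pos ⟨h1, h2⟩, show j - 1 + k + 1 - j = k by omega]
  have hle : f j ≤ E.sup f := Finset.le_sup hj
  have hpos : 0 < E.sup f := lt_of_lt_of_le (u.getD k 1).pos (hfj ▸ hle)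
  rw [if_pos hpos]
  exact le_trans (le_of_eq hfj) hle

lemma Em_cluster_self {u : Word} {E : Finset ℕ} {m : ℕ}
    (hval : ∀ a ∈ E, 1 ≤ a ∧ a - 1 + u.length ≤ m) :
    ∀ j ∈ E, j ∈ Em u (extCluster u E m) :=
  subset_Em_of_dom (length_extCluster u E m) hval (fun _ _ => le_refl _)

/-! ### Height basics -/

lemma ht_eq_sum_getD (w : Word) :
    ht w = ∑ p ∈ Finset.range w.length, ((w.getD p 1 : ℕ+) : ℕ) := by
  induction w with
  | nil => simp [ht]
  | cons a l ih =>
    rw [show ht (a :: l) = (a : ℕ) + ht l by simp [ht, mapcoe]]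
    rw [List.length_cons, Finset.sum_range_succ']
    simp only [List.getD_cons_succ, List.getD_cons_zero]
    rw [ih]
    omega

lemma ht_le_of_dom {c w : Word} (hlen : c.length = w.length)
    (hdom : ∀ p < w.length, c.getD p 1 ≤ w.getD p 1) : ht c ≤ ht w := by
  rw [ht_eq_sum_getD, ht_eq_sum_getD, hlen]
  apply Finset.sum_le_sum
  intro p hp
  exact_mod_cast hdom p (Finset.mem_range.mp hp)

/-! ### Layer decomposition of cluster heights -/

lemma clusterAt_layers {n : ℕ} {u : Word} (hn : 1 ≤ n)
    (hub : ∀ k < u.length, ((u.getD k 1 : ℕ+) : ℕ) ≤ n) (E : Finset ℕ) (p : ℕ) :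
    ((clusterAt u E p : ℕ+) : ℕ) = 1 + ((Finset.Icc 2 n).filter
      (fun i => ∃ a ∈ E, a ≤ p ∧ p < a + u.length ∧ i ≤ ((u.getD (p - a) 1 : ℕ+) : ℕ))).card := by
  set V := ((clusterAt u E p : ℕ+) : ℕ) with hV
  have h1 : 1 ≤ V := (clusterAt u E p).one_le
  have h2 : V ≤ n := clusterAt_le hn hub E p
  have h3 : ∀ i, 2 ≤ i → (i ≤ V ↔
      ∃ a ∈ E, a ≤ p ∧ p < a + u.length ∧ i ≤ ((u.getD (p - a) 1 : ℕ+) : ℕ)) :=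
    fun i hi => le_clusterAt_iff hi
  have hfe : (Finset.Icc 2 n).filter
      (fun i => ∃ a ∈ E, a ≤ p ∧ p < a + u.length ∧ i ≤ ((u.getD (p - a) 1 : ℕ+) : ℕ))
      = Finset.Icc 2 V := by
    ext i
    rw [Finset.mem_filter, Finset.mem_Icc, Finset.mem_Icc]
    constructor
    · rintro ⟨⟨hi2, _⟩, hact⟩
      exact ⟨hi2, (h3 i hi2).mpr hact⟩
    · rintro ⟨hi2, hiV⟩
      exact ⟨⟨hi2, le_trans hiV h2⟩, (h3 i hi2).mp hiV⟩
  rw [hfe, Nat.card_Icc]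
  omega

def Flayer (u : Word) (E : Finset ℕ) (m i : ℕ) : Finset ℕ :=
  (Finset.range m).filter
    (fun p => ∃ a ∈ E, a ≤ p + 1 ∧ p + 1 < a + u.length ∧ i ≤ ((u.getD (p + 1 - a) 1 : ℕ+) : ℕ))

lemma ht_extCluster {n : ℕ} {u : Word} (hn : 1 ≤ n)
    (hub : ∀ k < u.length, ((u.getD k 1 : ℕ+) : ℕ) ≤ n) (E : Finset ℕ) (m : ℕ) :
    ht (extCluster u E m) = m + ∑ i ∈ Finset.Icc 2 n, (Flayer u E m i).card := by
  rw [ht_eq_sum_getD, length_extCluster]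
  have hpt : ∀ p ∈ Finset.range m, (((extCluster u E m).getD p 1 : ℕ+) : ℕ)
      = 1 + ((Finset.Icc 2 n).filter
      (fun i => ∃ a ∈ E, a ≤ p + 1 ∧ p + 1 < a + u.length ∧
        i ≤ ((u.getD (p + 1 - a) 1 : ℕ+) : ℕ))).card := by
    intro p hp
    rw [getD_extCluster u E (Finset.mem_range.mp hp)]
    exact clusterAt_layers hn hub E (p + 1)
  rw [Finset.sum_congr rfl hpt, Finset.sum_add_distrib]
  congr 1
  · simp
  · -- swap the order of summation
    simp only [Finset.card_filter, Flayer]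
    rw [Finset.sum_comm]

/-! ### Union and intersection layers over ℤ -/

def Ulayer (X : Finset ℤ) (E : Finset ℕ) : Finset ℤ :=
  E.biUnion (fun a => X.image (fun z => z + (a : ℤ)))

def Ilayer (X : Finset ℤ) (E : Finset ℕ) : Finset ℤ :=
  (Ulayer X E).filter (fun p => ∀ a ∈ E, p - (a : ℤ) ∈ X)

lemma mem_Ulayer {X : Finset ℤ} {E : Finset ℕ} {p : ℤ} :
    p ∈ Ulayer X E ↔ ∃ a ∈ E, p - (a : ℤ) ∈ X := by
  rw [Ulayer, Finset.mem_biUnion]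
  constructor
  · rintro ⟨a, ha, hz⟩
    rw [Finset.mem_image] at hz
    obtain ⟨z, hz, rfl⟩ := hz
    exact ⟨a, ha, by simpa using hz⟩
  · rintro ⟨a, ha, hz⟩
    exact ⟨a, ha, Finset.mem_image.mpr ⟨p - a, hz, by ring⟩⟩

lemma mem_Ilayer {X : Finset ℤ} {E : Finset ℕ} (hE : E.Nonempty) {p : ℤ} :
    p ∈ Ilayer X E ↔ ∀ a ∈ E, p - (a : ℤ) ∈ X := by
  rw [Ilayer, Finset.mem_filter]
  constructor
  · exact fun h => h.2
  · intro h
    obtain ⟨a, ha⟩ := hE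
    exact ⟨mem_Ulayer.mpr ⟨a, ha, h a ha⟩, h⟩

lemma Ulayer_image {X : Finset ℤ} {E : Finset ℕ} (c : ℤ) :
    Ulayer (X.image (fun z => z + c)) E = (Ulayer X E).image (fun z => z + c) := by
  ext p
  rw [mem_Ulayer, Finset.mem_image]
  constructor
  · rintro ⟨a, ha, hz⟩
    rw [Finset.mem_image] at hz
    obtain ⟨z, hzX, hze⟩ := hz
    exact ⟨p - c, mem_Ulayer.mpr ⟨a, ha, by rw [show p - c - a = z by omega]; exact hzX⟩, by ring⟩
  · rintro ⟨q, hq, rfl⟩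
    rw [mem_Ulayer] at hq
    obtain ⟨a, ha, hz⟩ := hq
    exact ⟨a, ha, Finset.mem_image.mpr ⟨q - a, hz, by ring⟩⟩

lemma Ilayer_image {X : Finset ℤ} {E : Finset ℕ} (hE : E.Nonempty) (c : ℤ) :
    Ilayer (X.image (fun z => z + c)) E = (Ilayer X E).image (fun z => z + c) := by
  ext p
  rw [mem_Ilayer hE, Finset.mem_image]
  constructor
  · intro h
    refine ⟨p - c, (mem_Ilayer hE).mpr (fun a ha => ?_), by ring⟩
    have := h a ha
    rw [Finset.mem_image] at this
    obtain ⟨z, hz, hze⟩ := this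
    rw [show p - c - a = z by omega]
    exact hz
  · rintro ⟨q, hq, rfl⟩
    intro a ha
    rw [mem_Ilayer hE] at hq
    exact Finset.mem_image.mpr ⟨q - a, hq a ha, by ring⟩

lemma card_Ulayer_image {X : Finset ℤ} {E : Finset ℕ} (c : ℤ) :
    (Ulayer (X.image (fun z => z + c)) E).card = (Ulayer X E).card := by
  rw [Ulayer_image, Finset.card_image_of_injective _ (add_left_injective c)]

lemma card_Ilayer_image {X : Finset ℤ} {E : Finset ℕ} (hE : E.Nonempty) (c : ℤ) :
    (Ilayer (X.image (fun z => z + c)) E).card = (Ilayer X E).card := by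
  rw [Ilayer_image hE, Finset.card_image_of_injective _ (add_left_injective c)]

lemma card_Flayer_eq_Ulayer {n : ℕ} {u : Word} (hlen : u.length = n) {E : Finset ℕ} {m : ℕ}
    (hval : ∀ a ∈ E, 1 ≤ a ∧ a + n ≤ m + 1) (i : ℕ) :
    (Flayer u E m i).card = (Ulayer (Zset u i) E).card := by
  refine Finset.card_bij (fun p _ => (p : ℤ) + 1) ?_ ?_ ?_
  · intro p hp
    rw [Flayer, Finset.mem_filter] at hp
    obtain ⟨hpm, a, ha, h1, h2, h3⟩ := hp
    rw [mem_Ulayer]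
    refine ⟨a, ha, ?_⟩
    rw [mem_Zset]
    exact ⟨p + 1 - a, ⟨by omega, h3⟩, by push_cast; omega⟩
  · intro p1 hp1 p2 hp2 he
    omega
  · intro q hq
    rw [mem_Ulayer] at hq
    obtain ⟨a, ha, hz⟩ := hq
    rw [mem_Zset] at hz
    obtain ⟨k, ⟨hk1, hk2⟩, hk3⟩ := hz
    have ha' := hval a ha
    refine ⟨(q - 1).toNat, ?_, ?_⟩
    · rw [Flayer, Finset.mem_filter, Finset.mem_range]
      have hq1 : q = (k : ℤ) + a := by omega
      constructor
      · omega
      · refine ⟨a, ha, by omega, by omega, ?_⟩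
        rw [show (q - 1).toNat + 1 - a = k by omega]
        exact hk2
    · omega

/-! ### Inclusion–exclusion -/

lemma card_Ilayer_IE (X : Finset ℤ) (A : Finset ℕ) (hA : A.Nonempty) :
    ((Ilayer X A).card : ℤ) =
      ∑ B ∈ A.powerset, (-1 : ℤ) ^ (B.card + 1) * ((Ulayer X B).card : ℤ) := by
  have hsub : ∀ B ∈ A.powerset, Ulayer X B ⊆ Ulayer X A := by
    intro B hB
    rw [Finset.mem_powerset] at hB
    exact Finset.biUnion_subset_biUnion_of_subset_left _ hB
  have hcard : ∀ B ∈ A.powerset, ((Ulayer X B).card : ℤ)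
      = ∑ p ∈ Ulayer X A, (if p ∈ Ulayer X B then (1 : ℤ) else 0) := by
    intro B hB
    rw [Finset.sum_ite_mem, Finset.inter_eq_right.mpr (hsub B hB)]
    simp
  rw [Finset.sum_congr rfl (fun B hB => by rw [hcard B hB])]
  simp_rw [Finset.mul_sum]
  rw [Finset.sum_comm]
  have hinner : ∀ p ∈ Ulayer X A,
      (∑ B ∈ A.powerset, (-1 : ℤ) ^ (B.card + 1) * (if p ∈ Ulayer X B then (1 : ℤ) else 0))
      = (if ∀ a ∈ A, p - (a : ℤ) ∈ X then (1 : ℤ) else 0) := by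
    intro p hp
    set An := A.filter (fun a : ℕ => p - (a : ℤ) ∉ X) with hAn
    have hmemU : ∀ B ∈ A.powerset, (p ∈ Ulayer X B ↔ ¬ (B ⊆ An)) := by
      intro B hB
      rw [Finset.mem_powerset] at hB
      rw [mem_Ulayer]
      constructor
      · rintro ⟨a, ha, hx⟩ hcon
        have := hcon ha
        rw [hAn, Finset.mem_filter] at this
        exact this.2 hx
      · intro hcon
        by_contra hno
        push_neg at hno
        apply hcon
        intro a ha
        rw [hAn, Finset.mem_filter]
        exact ⟨hB ha, hno a ha⟩
    rw [Finset.sum_congr rfl (fun B hB => by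
      rw [show (if p ∈ Ulayer X B then (1:ℤ) else 0)
        = 1 - (if B ⊆ An then (1:ℤ) else 0) by
          rw [if_congr (hmemU B hB) rfl rfl]; split_ifs <;> simp])]
    simp_rw [mul_sub, mul_one]
    rw [Finset.sum_sub_distrib]
    have h1 : (∑ B ∈ A.powerset, (-1 : ℤ) ^ (B.card + 1)) = 0 := by
      have := Finset.sum_powerset_neg_one_pow_card (x := A)
      have h2 : (∑ B ∈ A.powerset, (-1 : ℤ) ^ (B.card + 1))
          = -∑ B ∈ A.powerset, (-1 : ℤ) ^ B.card := by
        rw [← Finset.sum_neg_distrib]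
        apply Finset.sum_congr rfl
        intro B _
        ring
      rw [h2, this, if_neg (Finset.nonempty_iff_ne_empty.mp hA)]
      ring
    rw [h1]
    have h3 : (∑ B ∈ A.powerset, (-1 : ℤ) ^ (B.card + 1) * (if B ⊆ An then (1:ℤ) else 0))
        = ∑ B ∈ An.powerset, (-1 : ℤ) ^ (B.card + 1) := by
      have hAnA : An ⊆ A := by rw [hAn]; exact Finset.filter_subset _ _
      rw [← Finset.sum_subset (Finset.powerset_mono.mpr hAnA)]
      · apply Finset.sum_congr rfl
        intro B hB
        rw [Finset.mem_powerset] at hB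
        rw [if_pos hB, mul_one]
      · intro B hB hnB
        rw [Finset.mem_powerset] at hnB
        rw [if_neg hnB, mul_zero]
    rw [h3]
    have h4 : (∑ B ∈ An.powerset, (-1 : ℤ) ^ (B.card + 1))
        = -(if An = ∅ then (1:ℤ) else 0) := by
      rw [← Finset.sum_powerset_neg_one_pow_card (x := An), ← Finset.sum_neg_distrib]
      apply Finset.sum_congr rfl
      intro B _
      ring
    rw [h4]
    have h5 : (An = ∅) ↔ (∀ a ∈ A, p - (a : ℤ) ∈ X) := by
      rw [hAn, Finset.filter_eq_empty_iff]
      push_neg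
      rfl
    rw [if_congr h5 rfl rfl]
    ring
  rw [Finset.sum_congr rfl hinner]
  rw [Finset.sum_ite, Finset.sum_const_zero, add_zero, Finset.sum_const]
  rw [Ilayer]
  simp

/-! ### Forward direction: SSWilf implies cluster height equality -/

lemma ht_cluster_eq_of_sswilf {u v : Word} (hss : SSWilf u v) (hluv : u.length = v.length)
    {E : Finset ℕ} {m : ℕ} (hval : ∀ a ∈ E, 1 ≤ a ∧ a - 1 + u.length ≤ m) :
    ht (extCluster u E m) = ht (extCluster v E m) := by
  obtain ⟨f, hbij, hprop, hEm⟩ := hss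
  apply le_antisymm
  · -- use surjectivity: w0 with f w0 = v-cluster
    obtain ⟨w0, hw0⟩ := hbij.2 (extCluster v E m)
    have hlw0 : w0.length = m := by
      have := (hprop w0).1
      rw [hw0, length_extCluster] at this
      omega
    have hEv : ∀ j ∈ E, j ∈ Em v (f w0) := by
      rw [hw0]
      exact Em_cluster_self (fun a ha => ⟨(hval a ha).1, by rw [← hluv]; exact (hval a ha).2⟩)
    have hEu : ∀ j ∈ E, j ∈ Em u w0 := by
      intro j hj
      rw [hEm w0]
      exact hEv j hj
    have hdom := fun p hp => dom_of_subset_Em hlw0 hEu (p := p) hp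
    have h1 : ht (extCluster u E m) ≤ ht w0 :=
      ht_le_of_dom (by rw [length_extCluster, hlw0]) (by rw [hlw0]; exact hdom)
    have h2 : ht w0 = ht (extCluster v E m) := by
      rw [← hw0]
      exact ((hprop w0).2).symm
    omega
  · set w : Word := extCluster u E m with hw
    have hEu : ∀ j ∈ E, j ∈ Em u w := Em_cluster_self hval
    have hEv : ∀ j ∈ E, j ∈ Em v (f w) := by
      intro j hj
      rw [← hEm w]
      exact hEu j hj
    have hlfw : (f w).length = m := by
      rw [(hprop w).1, hw, length_extCluster]
    have h1 : ht (extCluster v E m) ≤ ht (f w) :=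
      ht_le_of_dom (by rw [length_extCluster, hlfw])
        (by rw [hlfw]; exact fun p hp => dom_of_subset_Em hlfw hEv hp)
    have h2 : ht (f w) = ht w := (hprop w).2
    omega

lemma sum_Ulayer_eq_of_sswilf {n : ℕ} {u v : Word} (hu : IsPerm n u) (hv : IsPerm n v)
    (hss : SSWilf u v) (hn : 1 ≤ n) (E : Finset ℕ) (hpos : ∀ a ∈ E, 1 ≤ a) :
    (∑ i ∈ Finset.Icc 2 n, (Ulayer (Zset u i) E).card)
      = ∑ i ∈ Finset.Icc 2 n, (Ulayer (Zset v i) E).card := by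
  rcases E.eq_empty_or_nonempty with rfl | hEne
  · simp [Ulayer]
  set m : ℕ := E.max' hEne + n with hm
  have hmax : ∀ a ∈ E, a ≤ E.max' hEne := fun a ha => Finset.le_max' E a ha
  have hval : ∀ a ∈ E, 1 ≤ a ∧ a + n ≤ m + 1 := by
    intro a ha
    exact ⟨hpos a ha, by have := hmax a ha; omega⟩
  have hub_u : ∀ k < u.length, ((u.getD k 1 : ℕ+) : ℕ) ≤ n :=
    fun k hk => (isPerm_getD_mem hu hk).2
  have hub_v : ∀ k < v.length, ((v.getD k 1 : ℕ+) : ℕ) ≤ n :=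
    fun k hk => (isPerm_getD_mem hv hk).2
  have hhtu := ht_extCluster hn hub_u E m
  have hhtv := ht_extCluster hn hub_v E m
  have hcl := ht_cluster_eq_of_sswilf hss (by rw [hu.1, hv.1])
    (E := E) (m := m) (fun a ha => ⟨hpos a ha, by rw [hu.1]; have := hmax a ha; omega⟩)
  have hFu : ∀ i ∈ Finset.Icc 2 n, (Flayer u E m i).card = (Ulayer (Zset u i) E).card :=
    fun i _ => card_Flayer_eq_Ulayer hu.1 hval i
  have hFv : ∀ i ∈ Finset.Icc 2 n, (Flayer v E m i).card = (Ulayer (Zset v i) E).card :=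
    fun i _ => card_Flayer_eq_Ulayer hv.1 hval i
  rw [Finset.sum_congr rfl hFu, Finset.sum_congr rfl hFv] at *
  omega

lemma N_eq_of_sswilf {n : ℕ} {u v : Word} (hu : IsPerm n u) (hv : IsPerm n v)
    (hss : SSWilf u v) (hn : 1 ≤ n) (A : Finset ℕ) (hAne : A.Nonempty)
    (hpos : ∀ a ∈ A, 1 ≤ a) :
    (∑ i ∈ Finset.Icc 2 n, ((Ilayer (Zset u i) A).card : ℤ))
      = ∑ i ∈ Finset.Icc 2 n, ((Ilayer (Zset v i) A).card : ℤ) := by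
  have hIE_u : ∀ i ∈ Finset.Icc 2 n, ((Ilayer (Zset u i) A).card : ℤ)
      = ∑ B ∈ A.powerset, (-1 : ℤ) ^ (B.card + 1) * ((Ulayer (Zset u i) B).card : ℤ) :=
    fun i _ => card_Ilayer_IE (Zset u i) A hAne
  have hIE_v : ∀ i ∈ Finset.Icc 2 n, ((Ilayer (Zset v i) A).card : ℤ)
      = ∑ B ∈ A.powerset, (-1 : ℤ) ^ (B.card + 1) * ((Ulayer (Zset v i) B).card : ℤ) :=
    fun i _ => card_Ilayer_IE (Zset v i) A hAne
  rw [Finset.sum_congr rfl hIE_u, Finset.sum_congr rfl hIE_v,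
    Finset.sum_comm, Finset.sum_comm (s := Finset.Icc 2 n)]
  apply Finset.sum_congr rfl
  intro B hB
  rw [← Finset.mul_sum, ← Finset.mul_sum]
  congr 1
  have hBpos : ∀ a ∈ B, 1 ≤ a := fun a ha => hpos a (Finset.mem_powerset.mp hB ha)
  have := sum_Ulayer_eq_of_sswilf hu hv hss hn B hBpos
  exact_mod_cast this

/-! ### From N-equality to translates -/

lemma translates_of_N {n : ℕ} {u v : Word} (hu : IsPerm n u) (hv : IsPerm n v) (hn : 1 ≤ n)
    (hN : ∀ A : Finset ℕ, A.Nonempty → (∀ a ∈ A, 1 ≤ a) →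
      (∑ i ∈ Finset.Icc 2 n, ((Ilayer (Zset u i) A).card : ℤ))
        = ∑ i ∈ Finset.Icc 2 n, ((Ilayer (Zset v i) A).card : ℤ)) :
    ∀ i, 2 ≤ i → i ≤ n → ∃ c : ℤ, Zset v i = (Zset u i).image (fun z => z + c) := by
  intro i
  induction i using Nat.strong_induction_on with
  | _ i IH =>
    intro h2 hin
    have hZu_card : (Zset u i).card = n + 1 - i := card_Zset hu (by omega)
    have hZv_card : (Zset v i).card = n + 1 - i := card_Zset hv (by omega)
    have hZune : (Zset u i).Nonempty := Finset.card_pos.mp (by omega)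
    set K : ℤ := (n : ℤ) + 1 with hK
    have hzbound : ∀ z ∈ Zset u i, 0 ≤ z ∧ z < (n : ℤ) := by
      intro z hz
      refine ⟨Zset_nonneg hz, ?_⟩
      have := Zset_lt hz
      rwa [hu.1] at this
    set A : Finset ℕ := (Zset u i).image (fun z => (K - z).toNat) with hA
    have hAne : A.Nonempty := hZune.image _
    have hApos : ∀ a ∈ A, 1 ≤ a := by
      intro a ha
      rw [hA, Finset.mem_image] at ha
      obtain ⟨z, hz, rfl⟩ := ha
      have := hzbound z hz
      omega
    have hcast : ∀ z ∈ Zset u i, (((K - z).toNat : ℤ)) = K - z := by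
      intro z hz
      have := hzbound z hz
      omega
    have hchar : ∀ (X : Finset ℤ) (p : ℤ),
        p ∈ Ilayer X A ↔ ∀ z ∈ Zset u i, p - K + z ∈ X := by
      intro X p
      rw [mem_Ilayer hAne]
      constructor
      · intro h z hz
        have hm : (K - z).toNat ∈ A := by
          rw [hA, Finset.mem_image]
          exact ⟨z, hz, rfl⟩
        have := h _ hm
        rwa [hcast z hz, show p - (K - z) = p - K + z by ring] at this
      · intro h a ha
        rw [hA, Finset.mem_image] at ha
        obtain ⟨z, hz, rfl⟩ := ha
        rw [hcast z hz, show p - (K - z) = p - K + z by ring]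
        exact h z hz
    have key := hN A hAne hApos
    -- terms j ≠ i agree
    have hzero : ∀ (w : Word), IsPerm n w → ∀ j, i < j → j ≤ n → Ilayer (Zset w j) A = ∅ := by
      intro w hw j hij hjn
      rw [Finset.eq_empty_iff_forall_notMem]
      intro p hp
      rw [hchar] at hp
      have hsub : (Zset u i).image (fun z => p - K + z) ⊆ Zset w j := by
        intro x hx
        rw [Finset.mem_image] at hx
        obtain ⟨z, hz, rfl⟩ := hx
        exact hp z hz
      have hcards : ((Zset u i).image (fun z => p - K + z)).card = n + 1 - i := by
        rw [Finset.card_image_of_injective _ (fun x y h => by omega), hZu_card]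
      have h1 := Finset.card_le_card hsub
      rw [hcards, card_Zset hw (by omega)] at h1
      omega
    have hagree : ∀ j ∈ (Finset.Icc 2 n).erase i,
        ((Ilayer (Zset u j) A).card : ℤ) = ((Ilayer (Zset v j) A).card : ℤ) := by
      intro j hj
      rw [Finset.mem_erase, Finset.mem_Icc] at hj
      obtain ⟨hne, hj2, hjn⟩ := hj
      rcases lt_or_gt_of_ne hne with hlt | hgt
      · -- j < i : use IH
        obtain ⟨c, hc⟩ := IH j hlt hj2 hjn
        rw [hc, card_Ilayer_image hAne]
      · -- j > i : both empty
        rw [hzero u hu j hgt hjn, hzero v hv j hgt hjn]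
    have hi_mem : i ∈ Finset.Icc 2 n := Finset.mem_Icc.mpr ⟨h2, hin⟩
    have hterm : ((Ilayer (Zset u i) A).card : ℤ) = ((Ilayer (Zset v i) A).card : ℤ) := by
      have h1 := Finset.sum_erase_add (Finset.Icc 2 n)
        (fun j => ((Ilayer (Zset u j) A).card : ℤ)) hi_mem
      have h2' := Finset.sum_erase_add (Finset.Icc 2 n)
        (fun j => ((Ilayer (Zset v j) A).card : ℤ)) hi_mem
      have h3 := Finset.sum_congr rfl hagree
      rw [← h1, ← h2', h3] at key
      linarith
    -- the u-term is at least 1 (witness p = K)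
    have hKmem : K ∈ Ilayer (Zset u i) A := by
      rw [hchar]
      intro z hz
      rwa [show K - K + z = z by ring]
    have hterm' : (Ilayer (Zset u i) A).card = (Ilayer (Zset v i) A).card := by
      exact_mod_cast hterm
    have hpos' : 1 ≤ (Ilayer (Zset v i) A).card := by
      have := Finset.card_pos.mpr ⟨K, hKmem⟩
      omega
    obtain ⟨p, hp⟩ := Finset.card_pos.mp hpos'
    rw [hchar] at hp
    refine ⟨p - K, ?_⟩
    have hsub : (Zset u i).image (fun z => z + (p - K)) ⊆ Zset v i := by
      intro x hx
      rw [Finset.mem_image] at hx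
      obtain ⟨z, hz, rfl⟩ := hx
      have := hp z hz
      rwa [show p - K + z = z + (p - K) by ring] at this
    have hcards : ((Zset u i).image (fun z => z + (p - K))).card = (Zset v i).card := by
      rw [Finset.card_image_of_injective _ (add_left_injective _), hZu_card, hZv_card]
    exact (Finset.eq_of_subset_of_card_le hsub (le_of_eq hcards.symm)).symm

lemma forward_direction {n : ℕ} {u v : Word} (hu : IsPerm n u) (hv : IsPerm n v)
    (hss : SSWilf u v) : ∀ i, 2 ≤ i → i ≤ n - 1 → Delta u i = Delta v i := by
  intro i h2 h1n
  have hn : 1 ≤ n := by omega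
  have hin : i ≤ n := by omega
  refine (translate_iff hu hv (by omega)).mpr ?_
  exact translates_of_N hu hv hn (N_eq_of_sswilf hu hv hss hn) i h2 hin

/-! ### Backward direction: translates from Delta -/

lemma translates_of_delta {n : ℕ} {u v : Word} (hu : IsPerm n u) (hv : IsPerm n v)
    (hD : ∀ i, 2 ≤ i → i ≤ n - 1 → Delta u i = Delta v i) :
    ∀ i, 2 ≤ i → i ≤ n → ∃ c : ℤ, Zset v i = (Zset u i).image (fun z => z + c) := by
  intro i h2 hin
  by_cases hcase : i ≤ n - 1
  · exact (translate_iff hu hv (by omega)).mp (hD i h2 hcase)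
  · -- i = n, singleton sets
    have hZu_card : (Zset u i).card = 1 := by
      have := card_Zset hu (i := i) (by omega)
      rw [this]; omega
    have hZv_card : (Zset v i).card = 1 := by
      have := card_Zset hv (i := i) (by omega)
      rw [this]; omega
    obtain ⟨z, hz⟩ := Finset.card_eq_one.mp hZu_card
    obtain ⟨z', hz'⟩ := Finset.card_eq_one.mp hZv_card
    refine ⟨z' - z, ?_⟩
    rw [hz, hz']
    rw [Finset.image_singleton]
    congr 1
    ring

lemma ht_cluster_eq_of_translates {n : ℕ} {u v : Word} (hu : IsPerm n u) (hv : IsPerm n v)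
    (hn : 1 ≤ n)
    (htr : ∀ i, 2 ≤ i → i ≤ n → ∃ c : ℤ, Zset v i = (Zset u i).image (fun z => z + c))
    {E : Finset ℕ} {m : ℕ} (hval : ∀ a ∈ E, 1 ≤ a ∧ a + n ≤ m + 1) :
    ht (extCluster u E m) = ht (extCluster v E m) := by
  have hub_u : ∀ k < u.length, ((u.getD k 1 : ℕ+) : ℕ) ≤ n :=
    fun k hk => (isPerm_getD_mem hu hk).2
  have hub_v : ∀ k < v.length, ((v.getD k 1 : ℕ+) : ℕ) ≤ n :=
    fun k hk => (isPerm_getD_mem hv hk).2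
  rw [ht_extCluster hn hub_u E m, ht_extCluster hn hub_v E m]
  congr 1
  apply Finset.sum_congr rfl
  intro i hi
  rw [Finset.mem_Icc] at hi
  rw [card_Flayer_eq_Ulayer hu.1 hval i, card_Flayer_eq_Ulayer hv.1 hval i]
  obtain ⟨c, hc⟩ := htr i hi.1 hi.2
  rw [hc, card_Ulayer_image]

/-! ### Word arithmetic for the counting bijections -/

lemma ht_cons (a : ℕ+) (l : Word) : ht (a :: l) = (a : ℕ) + ht l := by
  simp [ht, mapcoe]

lemma ht_nil : ht [] = 0 := rfl

def dif (c w : Word) : List ℕ := List.zipWith (fun (a b : ℕ+) => (b : ℕ) - (a : ℕ)) c w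

def addw (c : Word) (d : List ℕ) : Word := List.zipWith (fun (a : ℕ+) (b : ℕ) => ((a : ℕ) + b).toPNat') c d

lemma length_dif (c w : Word) : (dif c w).length = min c.length w.length := by
  rw [dif, List.length_zipWith]

lemma length_addw (c : Word) (d : List ℕ) : (addw c d).length = min c.length d.length := by
  rw [addw, List.length_zipWith]

lemma sum_dif {c w : Word} (hd : List.Forall₂ (· ≤ ·) c w) : (dif c w).sum + ht c = ht w := by
  induction hd with
  | nil => rfl
  | cons hab hl ih =>
    rename_i a b l1 l2
    rw [show dif (a :: l1) (b :: l2) = ((b:ℕ) - (a:ℕ)) :: dif l1 l2 from rfl]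
    rw [List.sum_cons, ht_cons, ht_cons]
    have hab' : (a : ℕ) ≤ (b : ℕ) := hab
    omega

lemma ht_addw : ∀ (c : Word) (d : List ℕ), d.length = c.length →
    ht (addw c d) = ht c + d.sum := by
  intro c
  induction c with
  | nil => intro d hd; rw [List.length_nil, List.length_eq_zero_iff] at hd; subst hd; rfl
  | cons a l ih =>
    intro d hd
    cases d with
    | nil => simp at hd
    | cons x d' =>
      rw [show addw (a :: l) (x :: d') = ((a : ℕ) + x).toPNat' :: addw l d' from rfl]
      rw [ht_cons, ht_cons, List.sum_cons, ih d' (by simpa using hd)]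
      rw [Nat.toPNat'_coe, if_pos (by have := a.pos; omega)]
      omega

lemma addw_dif {c w : Word} (hd : List.Forall₂ (· ≤ ·) c w) : addw c (dif c w) = w := by
  induction hd with
  | nil => rfl
  | cons hab hl ih =>
    rename_i a b l1 l2
    rw [show dif (a :: l1) (b :: l2) = ((b:ℕ) - (a:ℕ)) :: dif l1 l2 from rfl]
    rw [show addw (a :: l1) (((b:ℕ) - (a:ℕ)) :: dif l1 l2)
      = ((a : ℕ) + ((b:ℕ) - (a:ℕ))).toPNat' :: addw l1 (dif l1 l2) from rfl]
    rw [ih]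
    congr 1
    have hab' : (a : ℕ) ≤ (b : ℕ) := hab
    rw [show (a : ℕ) + ((b:ℕ) - (a:ℕ)) = (b : ℕ) by omega]
    exact PNat.coe_toPNat' b

lemma dif_addw : ∀ (c : Word) (d : List ℕ), d.length = c.length → dif c (addw c d) = d := by
  intro c
  induction c with
  | nil => intro d hd; rw [List.length_nil, List.length_eq_zero_iff] at hd; subst hd; rfl
  | cons a l ih =>
    intro d hd
    cases d with
    | nil => simp at hd
    | cons x d' =>
      rw [show addw (a :: l) (x :: d') = ((a : ℕ) + x).toPNat' :: addw l d' from rfl]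
      rw [show dif (a :: l) (((a : ℕ) + x).toPNat' :: addw l d')
        = ((((a : ℕ) + x).toPNat' : ℕ) - (a : ℕ)) :: dif l (addw l d') from rfl]
      rw [ih d' (by simpa using hd)]
      congr 1
      rw [Nat.toPNat'_coe, if_pos (by have := a.pos; omega)]
      omega

lemma dom_addw : ∀ (c : Word) (d : List ℕ), d.length = c.length →
    List.Forall₂ (· ≤ ·) c (addw c d) := by
  intro c
  induction c with
  | nil => intro d hd; exact List.Forall₂.nil
  | cons a l ih =>
    intro d hd
    cases d with
    | nil => simp at hd
    | cons x d' =>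
      rw [show addw (a :: l) (x :: d') = ((a : ℕ) + x).toPNat' :: addw l d' from rfl]
      refine List.Forall₂.cons ?_ (ih d' (by simpa using hd))
      rw [← PNat.coe_le_coe, Nat.toPNat'_coe, if_pos (by have := a.pos; omega)]
      omega

lemma forall2_iff_getD : ∀ {c w : Word}, c.length = w.length →
    (List.Forall₂ (· ≤ ·) c w ↔ ∀ p < w.length, c.getD p 1 ≤ w.getD p 1) := by
  intro c
  induction c with
  | nil =>
    intro w hlen
    have hw : w = [] := by
      cases w with
      | nil => rfl
      | cons b w' => simp at hlen
    subst hw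
    constructor
    · intro _ p hp
      simp at hp
    · intro _
      exact List.Forall₂.nil
  | cons a l ih =>
    intro w hlen
    cases w with
    | nil => simp at hlen
    | cons b w' =>
      constructor
      · intro h p hp
        rcases h with _ | ⟨hab, hl⟩
        cases p with
        | zero => simpa using hab
        | succ q =>
          rw [List.getD_cons_succ, List.getD_cons_succ]
          exact (ih (by simpa using hlen)).mp hl q (by simpa using hp)
      · intro h
        refine List.Forall₂.cons ?_ ?_
        · have := h 0 (by simp)
          simpa using this
        · refine (ih (by simpa using hlen)).mpr ?_
          intro p hp
          have := h (p + 1) (by simpa using hp)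
          simpa using this

/-! ### The finite set of words of given length and height -/

def Sfin : ℕ → ℕ → Finset Word
  | 0, h => if h = 0 then {([] : Word)} else ∅
  | m + 1, h =>
    (Finset.Icc 1 h).biUnion (fun x => (Sfin m (h - x)).image (fun w => x.toPNat' :: w))

lemma mem_Sfin : ∀ {m h : ℕ} {w : Word}, w ∈ Sfin m h ↔ w.length = m ∧ ht w = h := by
  intro m
  induction m with
  | zero =>
    intro h w
    rw [Sfin]
    split_ifs with h0
    · subst h0
      simp only [Finset.mem_singleton]
      constructor
      · rintro rfl
        exact ⟨rfl, rfl⟩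
      · rintro ⟨h1, _⟩
        exact List.length_eq_zero_iff.mp h1
    · simp only [Finset.notMem_empty, false_iff]
      rintro ⟨h1, h2⟩
      have : w = [] := List.length_eq_zero_iff.mp h1
      subst this
      exact h0 (h2.symm.trans rfl)
  | succ m ih =>
    intro h w
    rw [Sfin, Finset.mem_biUnion]
    constructor
    · rintro ⟨x, hx, hw⟩
      rw [Finset.mem_Icc] at hx
      rw [Finset.mem_image] at hw
      obtain ⟨w', hw', rfl⟩ := hw
      obtain ⟨hl, hh⟩ := ih.mp hw'
      constructor
      · simp [hl]
      · rw [ht_cons, hh, Nat.toPNat'_coe, if_pos (by omega)]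
        omega
    · rintro ⟨hl, hh⟩
      cases w with
      | nil => simp at hl
      | cons a w' =>
        refine ⟨(a : ℕ), ?_, ?_⟩
        · rw [Finset.mem_Icc]
          rw [ht_cons] at hh
          have := a.pos
          omega
        · rw [Finset.mem_image]
          refine ⟨w', ih.mpr ⟨by simpa using hl, ?_⟩, ?_⟩
          · rw [ht_cons] at hh
            omega
          · rw [PNat.coe_toPNat']

/-! ### Counting words dominating a cluster -/

lemma card_dom_filter_eq {m h : ℕ} {c c' : Word} (hc : c.length = m) (hc' : c'.length = m)
    (hht : ht c = ht c') :
    ((Sfin m h).filter (fun w => List.Forall₂ (· ≤ ·) c w)).card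
      = ((Sfin m h).filter (fun w => List.Forall₂ (· ≤ ·) c' w)).card := by
  have hmember : ∀ (c₀ c₁ : Word), c₀.length = m → c₁.length = m → ht c₀ = ht c₁ →
      ∀ w ∈ (Sfin m h).filter (fun w => List.Forall₂ (· ≤ ·) c₀ w),
      addw c₁ (dif c₀ w) ∈ (Sfin m h).filter (fun w => List.Forall₂ (· ≤ ·) c₁ w) := by
    intro c₀ c₁ h₀ h₁ hh w hw
    rw [Finset.mem_filter, mem_Sfin] at hw
    obtain ⟨⟨hwl, hwh⟩, hdom⟩ := hw
    have hdiflen : (dif c₀ w).length = m := by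
      rw [length_dif, h₀, hwl]
      omega
    have hdlen : (dif c₀ w).length = c₁.length := by rw [hdiflen, h₁]
    rw [Finset.mem_filter, mem_Sfin]
    refine ⟨⟨?_, ?_⟩, ?_⟩
    · rw [length_addw, h₁, hdiflen]; omega
    · rw [ht_addw c₁ _ hdlen, ← hh]
      have := sum_dif hdom
      omega
    · exact dom_addw c₁ _ hdlen
  apply Finset.card_bij (fun w _ => addw c' (dif c w))
  · intro w hw
    exact hmember c c' hc hc' hht w hw
  · -- injective
    intro w1 hw1 w2 hw2 he
    rw [Finset.mem_filter] at hw1 hw2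
    have h1 := congrArg (dif c') he
    have hl1 : (dif c w1).length = c'.length := by
      rw [length_dif, hc, (mem_Sfin.mp hw1.1).1, hc']; omega
    have hl2 : (dif c w2).length = c'.length := by
      rw [length_dif, hc, (mem_Sfin.mp hw2.1).1, hc']; omega
    rw [dif_addw c' _ hl1, dif_addw c' _ hl2] at h1
    have h2 := congrArg (addw c) h1
    rw [addw_dif hw1.2, addw_dif hw2.2] at h2
    exact h2
  · -- surjective
    intro w' hw'
    refine ⟨addw c (dif c' w'), hmember c' c hc' hc hht.symm w' hw', ?_⟩
    rw [Finset.mem_filter] at hw'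
    have hl : (dif c' w').length = c.length := by
      rw [length_dif, hc', (mem_Sfin.mp hw'.1).1, hc]; omega
    rw [dif_addw c _ hl, addw_dif hw'.2]

/-! ### Fibers and the counting argument -/

def gset (u : Word) (m h : ℕ) (E : Finset ℕ) : Finset Word :=
  (Sfin m h).filter (fun w => E ⊆ EmF u w)

def fiber (u : Word) (m h : ℕ) (E : Finset ℕ) : Finset Word :=
  (Sfin m h).filter (fun w => EmF u w = E)

lemma EmF_subset_window (u w : Word) :
    EmF u w ⊆ Finset.Icc 1 (w.length + 1 - u.length) :=
  Finset.filter_subset _ _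

lemma gset_eq_domfilter (u : Word) (m h : ℕ) (E : Finset ℕ)
    (hEW : E ⊆ Finset.Icc 1 (m + 1 - u.length)) :
    gset u m h E = (Sfin m h).filter (fun w => List.Forall₂ (· ≤ ·) (extCluster u E m) w) := by
  have hval : ∀ a ∈ E, 1 ≤ a ∧ a - 1 + u.length ≤ m := by
    intro a ha
    have := Finset.mem_Icc.mp (hEW ha)
    omega
  apply Finset.filter_congr
  intro w hw
  have hwl : w.length = m := (mem_Sfin.mp hw).1
  have hcl : (extCluster u E m).length = w.length := by
    rw [length_extCluster, hwl]
  rw [forall2_iff_getD hcl, hwl]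
  constructor
  · intro hsub
    intro p hp
    refine dom_of_subset_Em hwl ?_ hp
    intro j hj
    rw [← mem_EmF]
    exact hsub hj
  · intro hdom
    intro j hj
    rw [mem_EmF]
    exact subset_Em_of_dom hwl hval hdom j hj

lemma card_gset_eq {n : ℕ} {u v : Word} (hu : IsPerm n u) (hv : IsPerm n v) (hn : 1 ≤ n)
    (htr : ∀ i, 2 ≤ i → i ≤ n → ∃ c : ℤ, Zset v i = (Zset u i).image (fun z => z + c))
    (m h : ℕ) (E : Finset ℕ) (hEW : E ⊆ Finset.Icc 1 (m + 1 - n)) :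
    (gset u m h E).card = (gset v m h E).card := by
  have hEWu : E ⊆ Finset.Icc 1 (m + 1 - u.length) := by rw [hu.1]; exact hEW
  have hEWv : E ⊆ Finset.Icc 1 (m + 1 - v.length) := by rw [hv.1]; exact hEW
  rw [gset_eq_domfilter u m h E hEWu, gset_eq_domfilter v m h E hEWv]
  have hval : ∀ a ∈ E, 1 ≤ a ∧ a + n ≤ m + 1 := by
    intro a ha
    have := Finset.mem_Icc.mp (hEW ha)
    omega
  exact card_dom_filter_eq (length_extCluster u E m) (length_extCluster v E m)
    (ht_cluster_eq_of_translates hu hv hn htr hval)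

lemma card_filter_int {α : Type*} (s : Finset α) (p : α → Prop) [DecidablePred p] :
    (((s.filter p).card : ℤ)) = ∑ x ∈ s, (if p x then (1 : ℤ) else 0) := by
  rw [Finset.sum_ite, Finset.sum_const_zero, add_zero, Finset.sum_const]
  simp

lemma card_fiber_IE (u : Word) (m h : ℕ) (E : Finset ℕ)
    (hEW : E ⊆ Finset.Icc 1 (m + 1 - u.length)) :
    ((fiber u m h E).card : ℤ)
      = ∑ D ∈ ((Finset.Icc 1 (m + 1 - u.length)) \ E).powerset,
          (-1 : ℤ) ^ D.card * ((gset u m h (E ∪ D)).card : ℤ) := by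
  set W := Finset.Icc 1 (m + 1 - u.length) with hW
  have hstep : ∀ D ∈ (W \ E).powerset, ((gset u m h (E ∪ D)).card : ℤ)
      = ∑ w ∈ Sfin m h, (if E ∪ D ⊆ EmF u w then (1 : ℤ) else 0) := by
    intro D _
    rw [gset, card_filter_int]
  rw [Finset.sum_congr rfl (fun D hD => by rw [hstep D hD])]
  simp_rw [Finset.mul_sum]
  rw [Finset.sum_comm]
  have hinner : ∀ w ∈ Sfin m h,
      (∑ D ∈ (W \ E).powerset, (-1 : ℤ) ^ D.card * (if E ∪ D ⊆ EmF u w then (1 : ℤ) else 0))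
      = (if EmF u w = E then (1 : ℤ) else 0) := by
    intro w hw
    have hwl : w.length = m := (mem_Sfin.mp hw).1
    have hFW : EmF u w ⊆ W := by
      rw [hW, ← hwl]
      exact EmF_subset_window u w
    by_cases hE : E ⊆ EmF u w
    · -- sum over D ⊆ (EmF u w) \ E
      have hsplit : ∀ D ∈ (W \ E).powerset,
          (if E ∪ D ⊆ EmF u w then (1 : ℤ) else 0) = (if D ⊆ EmF u w \ E then (1:ℤ) else 0) := by
        intro D hD
        rw [Finset.mem_powerset] at hD
        have hiff : (E ∪ D ⊆ EmF u w) ↔ (D ⊆ EmF u w \ E) := by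
          rw [Finset.union_subset_iff]
          constructor
          · rintro ⟨_, h2⟩
            intro x hx
            rw [Finset.mem_sdiff]
            have := hD hx
            rw [Finset.mem_sdiff] at this
            exact ⟨h2 hx, this.2⟩
          · intro hsub
            refine ⟨hE, fun x hx => ?_⟩
            have := hsub hx
            rw [Finset.mem_sdiff] at this
            exact this.1
        rw [if_congr hiff rfl rfl]
      rw [Finset.sum_congr rfl (fun D hD => by rw [hsplit D hD])]
      have hs2 : (∑ D ∈ (W \ E).powerset, (-1:ℤ)^D.card * (if D ⊆ EmF u w \ E then (1:ℤ) else 0))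
          = ∑ D ∈ (EmF u w \ E).powerset, (-1:ℤ)^D.card := by
        rw [← Finset.sum_subset (Finset.powerset_mono.mpr (Finset.sdiff_subset_sdiff hFW (le_refl E)))]
        · apply Finset.sum_congr rfl
          intro D hD
          rw [Finset.mem_powerset] at hD
          rw [if_pos hD, mul_one]
        · intro D _ hnD
          rw [Finset.mem_powerset] at hnD
          rw [if_neg hnD, mul_zero]
      rw [hs2, Finset.sum_powerset_neg_one_pow_card]
      have heq : (EmF u w \ E = ∅) ↔ (EmF u w = E) := by
        rw [Finset.sdiff_eq_empty_iff_subset]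
        constructor
        · intro hsub
          exact Finset.Subset.antisymm hsub hE
        · intro heq
          rw [heq]
      rw [if_congr heq rfl rfl]
    · -- E ⊄ EmF u w : all terms vanish and RHS vanishes
      have hzero : ∀ D ∈ (W \ E).powerset,
          (-1:ℤ)^D.card * (if E ∪ D ⊆ EmF u w then (1 : ℤ) else 0) = 0 := by
        intro D _
        have hneg : ¬ (E ∪ D ⊆ EmF u w) :=
          fun hcon => hE (le_trans Finset.subset_union_left hcon)
        rw [if_neg hneg, mul_zero]
      rw [Finset.sum_congr rfl hzero, Finset.sum_const_zero]
      have hneg2 : ¬ (EmF u w = E) := fun hcon => hE (by rw [hcon])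
      rw [if_neg hneg2]
  rw [Finset.sum_congr rfl hinner]
  rw [fiber, card_filter_int]

lemma card_fiber_eq {n : ℕ} {u v : Word} (hu : IsPerm n u) (hv : IsPerm n v) (hn : 1 ≤ n)
    (htr : ∀ i, 2 ≤ i → i ≤ n → ∃ c : ℤ, Zset v i = (Zset u i).image (fun z => z + c))
    (m h : ℕ) (E : Finset ℕ) :
    (fiber u m h E).card = (fiber v m h E).card := by
  by_cases hEW : E ⊆ Finset.Icc 1 (m + 1 - n)
  · have hEWu : E ⊆ Finset.Icc 1 (m + 1 - u.length) := by rw [hu.1]; exact hEW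
    have hEWv : E ⊆ Finset.Icc 1 (m + 1 - v.length) := by rw [hv.1]; exact hEW
    have h1 := card_fiber_IE u m h E hEWu
    have h2 := card_fiber_IE v m h E hEWv
    rw [hu.1] at h1
    rw [hv.1] at h2
    have h3 : ∀ D ∈ ((Finset.Icc 1 (m + 1 - n)) \ E).powerset,
        (-1 : ℤ) ^ D.card * ((gset u m h (E ∪ D)).card : ℤ)
        = (-1 : ℤ) ^ D.card * ((gset v m h (E ∪ D)).card : ℤ) := by
      intro D hD
      rw [Finset.mem_powerset] at hD
      congr 1
      rw [card_gset_eq hu hv hn htr m h (E ∪ D) ?_]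
      · intro x hx
        rcases Finset.mem_union.mp hx with hx | hx
        · exact hEW hx
        · have := hD hx
          exact (Finset.mem_sdiff.mp this).1
    have h4 : ((fiber u m h E).card : ℤ) = ((fiber v m h E).card : ℤ) := by
      rw [h1, h2]
      exact Finset.sum_congr rfl h3
    exact_mod_cast h4
  · -- E is not inside the window: both fibers are empty
    have hempty : ∀ t : Word, IsPerm n t → fiber t m h E = ∅ := by
      intro t ht'
      rw [Finset.eq_empty_iff_forall_notMem]
      intro w hw
      rw [fiber, Finset.mem_filter] at hw
      apply hEW
      rw [← hw.2, ← ht'.1]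
      have hwl : w.length = m := (mem_Sfin.mp hw.1).1
      rw [← hwl]
      exact EmF_subset_window t w
    rw [hempty u hu, hempty v hv]

/-! ### Gluing the bijection -/

lemma sswilf_refl (u w0 : Word) : SSWilf u u :=
  ⟨id, Function.bijective_id, fun _ => ⟨rfl, rfl⟩, fun _ => rfl⟩

lemma backward_direction {n : ℕ} {u v : Word} (hu : IsPerm n u) (hv : IsPerm n v) (hn : 1 ≤ n)
    (htr : ∀ i, 2 ≤ i → i ≤ n → ∃ c : ℤ, Zset v i = (Zset u i).image (fun z => z + c)) :
    SSWilf u v := by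
  classical
  have hcard : ∀ t : ℕ × ℕ × Finset ℕ,
      (fiber u t.1 t.2.1 t.2.2).card = (fiber v t.1 t.2.1 t.2.2).card :=
    fun t => card_fiber_eq hu hv hn htr t.1 t.2.1 t.2.2
  let eqv : ∀ t : ℕ × ℕ × Finset ℕ,
      {x // x ∈ fiber u t.1 t.2.1 t.2.2} ≃ {x // x ∈ fiber v t.1 t.2.1 t.2.2} :=
    fun t => Fintype.equivOfCardEq (by rw [Fintype.card_coe, Fintype.card_coe]; exact hcard t)
  let ιu : Word → ℕ × ℕ × Finset ℕ := fun w => (w.length, ht w, EmF u w)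
  let ιv : Word → ℕ × ℕ × Finset ℕ := fun w => (w.length, ht w, EmF v w)
  have hmemu : ∀ w : Word, w ∈ fiber u (ιu w).1 (ιu w).2.1 (ιu w).2.2 := by
    intro w
    rw [fiber, Finset.mem_filter, mem_Sfin]
    exact ⟨⟨rfl, rfl⟩, rfl⟩
  have hmemv : ∀ w : Word, w ∈ fiber v (ιv w).1 (ιv w).2.1 (ιv w).2.2 := by
    intro w
    rw [fiber, Finset.mem_filter, mem_Sfin]
    exact ⟨⟨rfl, rfl⟩, rfl⟩
  set f : Word → Word := fun w => ((eqv (ιu w)) ⟨w, hmemu w⟩ : {x // x ∈ fiber v _ _ _}).1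
    with hf
  set g : Word → Word := fun w' => ((eqv (ιv w')).symm ⟨w', hmemv w'⟩ :
    {x // x ∈ fiber u _ _ _}).1 with hg
  have hfprop : ∀ w, f w ∈ fiber v (ιu w).1 (ιu w).2.1 (ιu w).2.2 :=
    fun w => ((eqv (ιu w)) ⟨w, hmemu w⟩).2
  have hgprop : ∀ w', g w' ∈ fiber u (ιv w').1 (ιv w').2.1 (ιv w').2.2 :=
    fun w' => ((eqv (ιv w')).symm ⟨w', hmemv w'⟩).2
  have hfdata : ∀ w, (f w).length = w.length ∧ ht (f w) = ht w ∧ EmF v (f w) = EmF u w := by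
    intro w
    have := hfprop w
    rw [fiber, Finset.mem_filter, mem_Sfin] at this
    exact ⟨this.1.1, this.1.2, this.2⟩
  have hgdata : ∀ w', (g w').length = w'.length ∧ ht (g w') = ht w' ∧
      EmF u (g w') = EmF v w' := by
    intro w'
    have := hgprop w'
    rw [fiber, Finset.mem_filter, mem_Sfin] at this
    exact ⟨this.1.1, this.1.2, this.2⟩
  have hιvf : ∀ w, ιv (f w) = ιu w := by
    intro w
    obtain ⟨h1, h2, h3⟩ := hfdata w
    show ((f w).length, ht (f w), EmF v (f w)) = (w.length, ht w, EmF u w)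
    rw [h1, h2, h3]
  have hιug : ∀ w', ιu (g w') = ιv w' := by
    intro w'
    obtain ⟨h1, h2, h3⟩ := hgdata w'
    show ((g w').length, ht (g w'), EmF u (g w')) = (w'.length, ht w', EmF v w')
    rw [h1, h2, h3]
  have transport_symm : ∀ (t s : ℕ × ℕ × Finset ℕ), t = s → ∀ (x : Word)
      (hx : x ∈ fiber v t.1 t.2.1 t.2.2) (hx' : x ∈ fiber v s.1 s.2.1 s.2.2),
      ((eqv t).symm ⟨x, hx⟩).1 = ((eqv s).symm ⟨x, hx'⟩).1 := by
    rintro t s rfl x hx hx'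
    rfl
  have transport_fwd : ∀ (t s : ℕ × ℕ × Finset ℕ), t = s → ∀ (x : Word)
      (hx : x ∈ fiber u t.1 t.2.1 t.2.2) (hx' : x ∈ fiber u s.1 s.2.1 s.2.2),
      ((eqv t) ⟨x, hx⟩).1 = ((eqv s) ⟨x, hx'⟩).1 := by
    rintro t s rfl x hx hx'
    rfl
  have hgf : ∀ w, g (f w) = w := by
    intro w
    have step1 : g (f w) = ((eqv (ιu w)).symm ⟨f w, hfprop w⟩).1 :=
      transport_symm (ιv (f w)) (ιu w) (hιvf w) (f w) (hmemv (f w)) (hfprop w)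
    rw [step1]
    have step2 : (⟨f w, hfprop w⟩ : {x // x ∈ fiber v (ιu w).1 (ιu w).2.1 (ιu w).2.2})
        = (eqv (ιu w)) ⟨w, hmemu w⟩ := Subtype.ext rfl
    rw [step2, Equiv.symm_apply_apply]
  have hfg : ∀ w', f (g w') = w' := by
    intro w'
    have step1 : f (g w') = ((eqv (ιv w')) ⟨g w', hgprop w'⟩).1 :=
      transport_fwd (ιu (g w')) (ιv w') (hιug w') (g w') (hmemu (g w')) (hgprop w')
    rw [step1]
    have step2 : (⟨g w', hgprop w'⟩ : {x // x ∈ fiber u (ιv w').1 (ιv w').2.1 (ιv w').2.2})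
        = (eqv (ιv w')).symm ⟨w', hmemv w'⟩ := Subtype.ext rfl
    rw [step2, Equiv.apply_symm_apply]
  refine ⟨f, Function.bijective_iff_has_inverse.mpr ⟨g, hgf, hfg⟩, ?_, ?_⟩
  · intro w
    exact ⟨(hfdata w).1, (hfdata w).2.1⟩
  · intro w
    rw [← coe_EmF, ← coe_EmF, (hfdata w).2.2]


/-- main theorem: `u ∼ₛₛ v` iff `Δᵢ(u⁻¹) = Δᵢ(v⁻¹)` for all
`i ∈ [2, n-1]`. -/
theorem sswilf_iff_delta_eq (n : ℕ) (u v : Word)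
    (hu : IsPerm n u) (hv : IsPerm n v) :
    SSWilf u v ↔ ∀ i, 2 ≤ i → i ≤ n - 1 → Delta u i = Delta v i := by
  constructor
  · intro hss
    exact forward_direction hu hv hss
  · intro hD
    rcases Nat.eq_zero_or_pos n with rfl | hn
    · have hu0 : u = [] := List.length_eq_zero_iff.mp hu.1
      have hv0 : v = [] := List.length_eq_zero_iff.mp hv.1
      subst hu0; subst hv0
      exact sswilf_refl [] []
    · exact backward_direction hu hv hn (translates_of_delta hu hv hD)
end

section
/- For every permutation u of [n], the cardinality of the cross equivalence class of u is a power of 2. -/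
namespace CrossCore

/-- multiset of distances from `x` to multiset `s`. -/
def distM (x : ℤ) (s : Multiset ℤ) : Multiset ℕ := s.map fun a => (x - a).natAbs

lemma key_aux (N : ℕ) : ∀ (A : Finset ℤ), A.card ≤ N → ∀ x y : ℤ, x ≠ y →
    distM x A.val = distM y A.val → A.image (fun a => x + y - a) = A := by
  induction N with
  | zero =>
    intro A hA x y _ _
    have : A = ∅ := Finset.card_eq_zero.mp (Nat.le_zero.mp hA)
    subst this; simp
  | succ N ih =>
    intro A hA x y hxy hd
    rcases Nat.eq_zero_or_pos A.card with h0 | hpos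
    · have : A = ∅ := Finset.card_eq_zero.mp h0
      subst this; simp
    rcases eq_or_lt_of_le (Nat.succ_le_of_lt hpos) with h1 | h2
    · -- card = 1
      obtain ⟨a, rfl⟩ := Finset.card_eq_one.mp h1.symm
      simp only [Finset.image_singleton]
      have : (x - a).natAbs = (y - a).natAbs := by
        have := hd
        simp only [distM, Finset.singleton_val, Multiset.map_singleton,
          Multiset.singleton_inj] at this
        exact this
      have : x + y - a = a := by omega
      rw [this]
    · -- card ≥ 2
      have hne : A.Nonempty := Finset.card_pos.mp hpos
      set m := A.min' hne with hm
      set M := A.max' hne with hM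
      have hmem_m : m ∈ A := A.min'_mem hne
      have hmem_M : M ∈ A := A.max'_mem hne
      have hmM : m < M := A.min'_lt_max'_of_card (by omega)
      -- sup equality
      have hsup : A.sup (fun a => (x - a).natAbs) = A.sup (fun a => (y - a).natAbs) := by
        rw [Finset.sup_def, Finset.sup_def]
        exact congrArg Multiset.sup hd
      have hsx : A.sup (fun a => (x - a).natAbs) = max (x - m).toNat (M - x).toNat := by
        apply le_antisymm
        · apply Finset.sup_le
          intro a ha
          have h1 := A.min'_le a ha
          have h2 := A.le_max' a ha
          omega
        · apply max_le
          · calc (x - m).toNat ≤ (x - m).natAbs := by omega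
              _ ≤ _ := Finset.le_sup (f := fun a => (x - a).natAbs) hmem_m
          · calc (M - x).toNat ≤ (x - M).natAbs := by omega
              _ ≤ _ := Finset.le_sup (f := fun a => (x - a).natAbs) hmem_M
      have hsy : A.sup (fun a => (y - a).natAbs) = max (y - m).toNat (M - y).toNat := by
        apply le_antisymm
        · apply Finset.sup_le
          intro a ha
          have h1 := A.min'_le a ha
          have h2 := A.le_max' a ha
          omega
        · apply max_le
          · calc (y - m).toNat ≤ (y - m).natAbs := by omega
              _ ≤ _ := Finset.le_sup (f := fun a => (y - a).natAbs) hmem_m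
          · calc (M - y).toNat ≤ (y - M).natAbs := by omega
              _ ≤ _ := Finset.le_sup (f := fun a => (y - a).natAbs) hmem_M
      have hkey : x + y = m + M := by
        rw [hsx, hsy] at hsup
        -- pure arithmetic: x ≠ y, m < M
        rcases lt_or_gt_of_ne hxy with h | h
        · omega
        · omega
      -- cancellation
      set A' := (A.erase m).erase M with hA'
      have hMem : M ∈ A.erase m := Finset.mem_erase.mpr ⟨by omega, hmem_M⟩
      have hv1 : A.val = m ::ₘ (A.erase m).val := by
        rw [Finset.erase_val]
        exact (Multiset.cons_erase hmem_m).symm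
      have hv2 : (A.erase m).val = M ::ₘ A'.val := by
        rw [hA', Finset.erase_val]
        exact (Multiset.cons_erase hMem).symm
      have hd' : distM x A'.val = distM y A'.val := by
        have e1 : distM x A.val = (x - m).natAbs ::ₘ (x - M).natAbs ::ₘ distM x A'.val := by
          rw [hv1, hv2, distM, Multiset.map_cons, Multiset.map_cons]; rfl
        have e2 : distM y A.val = (y - m).natAbs ::ₘ (y - M).natAbs ::ₘ distM y A'.val := by
          rw [hv1, hv2, distM, Multiset.map_cons, Multiset.map_cons]; rfl
        have hab1 : (y - m).natAbs = (x - M).natAbs := by omega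
        have hab2 : (y - M).natAbs = (x - m).natAbs := by omega
        have := hd
        rw [e1, e2, hab1, hab2, Multiset.cons_swap] at this
        exact (Multiset.cons_inj_right _).mp ((Multiset.cons_inj_right _).mp this)
      have hcard' : A'.card ≤ N := by
        have c1 : (A.erase m).card = A.card - 1 := Finset.card_erase_of_mem hmem_m
        have c2 : A'.card = (A.erase m).card - 1 := Finset.card_erase_of_mem hMem
        omega
      have hIH := ih A' hcard' x y hxy hd'
      have hAeq : A = insert m (insert M A') := by
        rw [hA', Finset.insert_erase hMem, Finset.insert_erase hmem_m]
      rw [hAeq, Finset.image_insert, Finset.image_insert, hIH]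
      have e1 : x + y - m = M := by omega
      have e2 : x + y - M = m := by omega
      rw [e1, e2, Finset.insert_comm]

lemma reflection_of_eq_dist (A : Finset ℤ) (x y : ℤ) (hxy : x ≠ y)
    (hd : distM x A.val = distM y A.val) : A.image (fun a => x + y - a) = A :=
  key_aux A.card A le_rfl x y hxy hd

lemma reflection_unique (A : Finset ℤ) (hne : A.Nonempty) (s t : ℤ)
    (hs : A.image (fun a => s - a) = A) (ht : A.image (fun a => t - a) = A) : s = t := by
  have hmax : ∀ r : ℤ, A.image (fun a => r - a) = A → A.max' hne = r - A.min' hne := by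
    intro r hr
    apply le_antisymm
    · have : A.max' hne ∈ A.image (fun a => r - a) := by rw [hr]; exact A.max'_mem hne
      obtain ⟨a, ha, hav⟩ := Finset.mem_image.mp this
      have := A.min'_le a ha
      omega
    · have h : r - A.min' hne ∈ Finset.image (fun a => r - a) A :=
        Finset.mem_image_of_mem _ (A.min'_mem hne)
      rw [hr] at h
      exact A.le_max' _ h
  have h1 := hmax s hs
  have h2 := hmax t ht
  omega

def sol (A : Finset ℤ) (c : Multiset ℕ) : Finset ℤ :=
  A.filter (fun x => distM x (A.erase x).val = c)

lemma mem_sol {A : Finset ℤ} {c : Multiset ℕ} {x : ℤ} :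
    x ∈ sol A c ↔ x ∈ A ∧ distM x (A.erase x).val = c := Finset.mem_filter

lemma sol_reflection {A : Finset ℤ} {c : Multiset ℕ} {x y : ℤ} (hx : x ∈ sol A c)
    (hy : y ∈ sol A c) (hxy : x ≠ y) : A.image (fun a => x + y - a) = A := by
  obtain ⟨hxA, hdx⟩ := mem_sol.mp hx
  obtain ⟨hyA, hdy⟩ := mem_sol.mp hy
  apply reflection_of_eq_dist A x y hxy
  have ex : A.val = x ::ₘ (A.erase x).val := by
    rw [Finset.erase_val]; exact (Multiset.cons_erase hxA).symm
  have ey : A.val = y ::ₘ (A.erase y).val := by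
    rw [Finset.erase_val]; exact (Multiset.cons_erase hyA).symm
  have ddx : distM x A.val = 0 ::ₘ c := by
    rw [ex, distM, Multiset.map_cons, ← hdx]; simp [distM]
  have ddy : distM y A.val = 0 ::ₘ c := by
    rw [ey, distM, Multiset.map_cons, ← hdy]; simp [distM]
  rw [ddx, ddy]


lemma sol_card_le_two (A : Finset ℤ) (c : Multiset ℕ) : (sol A c).card ≤ 2 := by
  by_contra h
  push_neg at h
  obtain ⟨x, hx, y, hy, z, hz, hxy, hxz, hyz⟩ := Finset.two_lt_card.mp h
  have hne : A.Nonempty := ⟨x, (mem_sol.mp hx).1⟩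
  have h1 := sol_reflection hx hy hxy
  have h2 := sol_reflection hx hz hxz
  have := reflection_unique A hne (x + y) (x + z) h1 h2
  omega

def LL : List (Multiset ℕ) → Finset ℤ → Finset (List ℤ)
  | [], A => {A.sort (· ≤ ·)}
  | c :: cs, A => (sol A c).biUnion fun x => (LL cs (A.erase x)).image (x :: ·)

lemma LL_card_cons (c : Multiset ℕ) (cs : List (Multiset ℕ)) (A : Finset ℤ) :
    (LL (c :: cs) A).card = ∑ x ∈ sol A c, (LL cs (A.erase x)).card := by
  rw [LL, Finset.card_biUnion]
  · apply Finset.sum_congr rfl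
    intro x _
    exact Finset.card_image_of_injective _ (fun a b h => (List.cons.injEq _ _ _ _ ▸ h).2)
  · intro x _ y _ hxy
    simp only [Finset.disjoint_left, Finset.mem_image]
    rintro l ⟨t, _, rfl⟩ ⟨t', _, h⟩
    exact hxy (List.cons.injEq _ _ _ _ ▸ h.symm).1

section Isometry

variable (σ : ℤ → ℤ) (hσ : ∀ a b : ℤ, (σ a - σ b).natAbs = (a - b).natAbs)

include hσ

lemma iso_injective : Function.Injective σ := by
  intro a b h
  have := hσ a b
  rw [h] at this
  simp only [sub_self, Int.natAbs_zero] at this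
  omega

lemma sol_image (A : Finset ℤ) (c : Multiset ℕ) :
    sol (A.image σ) c = (sol A c).image σ := by
  have hinj := iso_injective σ hσ
  have hdeq : ∀ x : ℤ, x ∈ A → distM (σ x) ((A.image σ).erase (σ x)).val
      = distM x (A.erase x).val := by
    intro x _
    rw [← Finset.image_erase hinj, Finset.image_val_of_injOn (hinj.injOn)]
    simp only [distM, Multiset.map_map, Function.comp]
    apply Multiset.map_congr rfl
    intro a _
    exact hσ x a
  ext x'
  constructor
  · intro hx'
    obtain ⟨hmem, hd⟩ := mem_sol.mp hx'
    obtain ⟨x, hx, rfl⟩ := Finset.mem_image.mp hmem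
    apply Finset.mem_image_of_mem
    exact mem_sol.mpr ⟨hx, by rw [← hdeq x hx]; exact hd⟩
  · intro hx'
    obtain ⟨x, hx, rfl⟩ := Finset.mem_image.mp hx'
    obtain ⟨hxA, hd⟩ := mem_sol.mp hx
    exact mem_sol.mpr ⟨Finset.mem_image_of_mem _ hxA, by rw [hdeq x hxA]; exact hd⟩

lemma LL_card_image : ∀ (cs : List (Multiset ℕ)) (A : Finset ℤ),
    (LL cs (A.image σ)).card = (LL cs A).card := by
  intro cs
  induction cs with
  | nil => intro A; simp [LL]
  | cons c cs ih =>
    intro A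
    have hinj := iso_injective σ hσ
    rw [LL_card_cons, LL_card_cons, sol_image σ hσ, Finset.sum_image (fun a _ b _ h => hinj h)]
    apply Finset.sum_congr rfl
    intro x _
    rw [← Finset.image_erase hinj, ih]

end Isometry

lemma LL_card_pow : ∀ (cs : List (Multiset ℕ)) (A : Finset ℤ),
    (LL cs A).card = 0 ∨ ∃ k : ℕ, (LL cs A).card = 2 ^ k := by
  intro cs
  induction cs with
  | nil => intro A; exact Or.inr ⟨0, by simp [LL]⟩
  | cons c cs ih =>
    intro A
    rw [LL_card_cons]
    have h2 := sol_card_le_two A c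
    interval_cases h : (sol A c).card
    · rw [Finset.card_eq_zero.mp h]
      simp
    · obtain ⟨x, hx⟩ := Finset.card_eq_one.mp h
      rw [hx, Finset.sum_singleton]
      exact ih (A.erase x)
    · obtain ⟨x, y, hxy, hxy2⟩ := Finset.card_eq_two.mp h
      have hxs : x ∈ sol A c := by rw [hxy2]; simp
      have hys : y ∈ sol A c := by rw [hxy2]; simp
      set σ : ℤ → ℤ := fun a => x + y - a with hσdef
      have hσ : ∀ a b : ℤ, (σ a - σ b).natAbs = (a - b).natAbs := by
        intro a b; simp only [hσdef]; omega
      have hrefl : A.image σ = A := sol_reflection hxs hys hxy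
      have herase : A.erase y = (A.erase x).image σ := by
        rw [Finset.image_erase (iso_injective σ hσ), hrefl]
        have : σ x = y := by simp only [hσdef]; ring
        rw [this]
      rw [hxy2, Finset.sum_pair hxy, herase, LL_card_image σ hσ]
      rcases ih (A.erase x) with h0 | ⟨k, hk⟩
      · rw [h0]; simp
      · right; exact ⟨k + 1, by rw [hk]; ring⟩


def Cond : List (Multiset ℕ) → List ℤ → Prop
  | [], _ => True
  | _ :: _, [] => False
  | c :: cs, x :: t => distM x ↑t = c ∧ Cond cs t

lemma coe_eq_val_of_toFinset {l : List ℤ} {B : Finset ℤ} (hnd : l.Nodup)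
    (h : l.toFinset = B) : (l : Multiset ℤ) = B.val := by
  rw [← h]
  show (l : Multiset ℤ) = (l : Multiset ℤ).dedup
  rw [Multiset.dedup_eq_self.mpr]
  exact hnd

lemma mem_LL : ∀ (cs : List (Multiset ℕ)) (A : Finset ℤ) (l : List ℤ),
    A.card = cs.length + 1 →
    (l ∈ LL cs A ↔ l.Nodup ∧ l.toFinset = A ∧ Cond cs l) := by
  intro cs
  induction cs with
  | nil =>
    intro A l hcard
    simp only [List.length_nil, zero_add] at hcard
    obtain ⟨a, rfl⟩ := Finset.card_eq_one.mp hcard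
    rw [LL]
    simp only [Finset.sort_singleton, Finset.mem_singleton]
    constructor
    · rintro rfl
      refine ⟨List.nodup_singleton a, by simp, trivial⟩
    · rintro ⟨hnd, hfin, -⟩
      have hlen : l.length = 1 := by
        rw [← List.toFinset_card_of_nodup hnd, hfin, Finset.card_singleton]
      obtain ⟨b, rfl⟩ := List.length_eq_one_iff.mp hlen
      simp only [List.toFinset_cons, List.toFinset_nil, insert_empty_eq] at hfin
      rw [Finset.singleton_inj.mp hfin]
    | cons c cs ih =>
    intro A l hcard
    rw [LL]
    simp only [Finset.mem_biUnion, Finset.mem_image]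
    constructor
    · rintro ⟨x, hx, t, ht, rfl⟩
      obtain ⟨hxA, hdx⟩ := mem_sol.mp hx
      have hcard' : (A.erase x).card = cs.length + 1 := by
        rw [Finset.card_erase_of_mem hxA]; simp at hcard ⊢; omega
      obtain ⟨hnd, hfin, hcond⟩ := (ih (A.erase x) t hcard').mp ht
      have hxt : x ∉ t := by
        intro hmem
        have : x ∈ A.erase x := hfin ▸ List.mem_toFinset.mpr hmem
        exact (Finset.notMem_erase x A) this
      refine ⟨List.nodup_cons.mpr ⟨hxt, hnd⟩, ?_, ?_⟩
      · rw [List.toFinset_cons, hfin, Finset.insert_erase hxA]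
      · refine ⟨?_, hcond⟩
        rw [coe_eq_val_of_toFinset hnd hfin]
        exact hdx
    · rintro ⟨hnd, hfin, hcond⟩
      match l with
      | [] => exact absurd hcond not_false
      | x :: t =>
        obtain ⟨hd, hcond'⟩ := hcond
        obtain ⟨hxt, hndt⟩ := List.nodup_cons.mp hnd
        have hxA : x ∈ A := by
          rw [← hfin]; exact List.mem_toFinset.mpr (List.mem_cons_self (a := x) (l := t))
        have hfint : t.toFinset = A.erase x := by
          rw [← hfin, List.toFinset_cons, Finset.erase_insert]
          rw [List.mem_toFinset]
          exact hxt
        have hcard' : (A.erase x).card = cs.length + 1 := by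
          rw [Finset.card_erase_of_mem hxA]; simp at hcard ⊢; omega
        refine ⟨x, mem_sol.mpr ⟨hxA, ?_⟩, t, (ih (A.erase x) t hcard').mpr ⟨hndt, hfint, hcond'⟩, rfl⟩
        rw [← coe_eq_val_of_toFinset hndt hfint]
        exact hd

lemma cond_iff : ∀ (cs : List (Multiset ℕ)) (l : List ℤ), l.length = cs.length + 1 →
    (Cond cs l ↔ ∀ i, i < cs.length →
      distM (l.getD i 0) ↑(l.drop (i+1)) = cs.getD i 0) := by
  intro cs
  induction cs with
  | nil => intro l _; simp [Cond]
  | cons c cs ih =>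
    intro l hlen
    match l with
    | x :: t =>
      simp only [List.length_cons, Nat.add_right_cancel_iff] at hlen
      rw [Cond]
      constructor
      · rintro ⟨hd, hcond⟩ i hi
        match i with
        | 0 => simpa using hd
        | i + 1 =>
          simp only [List.length_cons] at hi
          have := ((ih t hlen).mp hcond) i (by omega)
          simpa using this
      · intro h
        constructor
        · simpa using h 0 (by simp)
        · refine (ih t hlen).mpr ?_
          intro i hi
          have := h (i+1) (by simp; omega)
          simpa using this

end CrossCore


namespace CrossGlue

open CrossCore

lemma range'_drop : ∀ (i m s : ℕ), (List.range' s m).drop i = List.range' (s + i) (m - i) := by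
  intro i
  induction i with
  | zero => intro m s; simp
  | succ i ih =>
    intro m s
    match m with
    | 0 => simp
    | m + 1 =>
      rw [List.range'_succ, List.drop_succ_cons, ih m (s+1)]
      congr 1 <;> omega

lemma count_eq_one_of_nodup_mem {α : Type*} [DecidableEq α] {l : List α} {a : α}
    (h : l.Nodup) (ha : a ∈ l) : l.count a = 1 :=
  le_antisymm (List.nodup_iff_count_le_one.mp h a) (List.count_pos_iff.mpr ha)

lemma indexOf_getElem {α : Type*} [DecidableEq α] {l : List α} (h : l.Nodup)
    {i : ℕ} (hi : i < l.length) : l.idxOf l[i] = i := by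
  have hmem : l[i] ∈ l := List.getElem_mem hi
  have hlt : l.idxOf l[i] < l.length := List.idxOf_lt_length_iff.mpr hmem
  have := List.idxOf_get hlt
  have hinj := List.nodup_iff_injective_get.mp h
  have : l.get ⟨l.idxOf l[i], hlt⟩ = l.get ⟨i, hi⟩ := this
  have := hinj this
  exact congrArg Fin.val this

def wm (v : Word) : List ℕ := v.map (fun x => (x : ℕ))

lemma wm_eq (v : Word) : wm v = List.map (fun x : ℕ+ => (x : ℕ)) v := by
  unfold wm
  induction v with
  | nil => rfl
  | cons a t ih => simpa using ih

lemma pos_def (v : Word) (k : ℕ) : pos v k = (wm v).idxOf k + 1 := rfl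

lemma wm_length {n : ℕ} {v : Word} (hv : IsPerm n v) : (wm v).length = n := by
  rw [wm_eq, List.length_map]
  exact hv.1

lemma isPerm_perm {n : ℕ} {v : Word} (hv : IsPerm n v) : (wm v).Perm (List.range' 1 n) := by
  apply List.Perm.symm
  apply List.Subperm.perm_of_length_le
  · rw [List.subperm_ext_iff]
    intro x hx
    rw [List.mem_range'_1] at hx
    have h1 : List.count x (List.range' 1 n) ≤ 1 :=
      List.nodup_iff_count_le_one.mp (List.nodup_range' (s := 1) (n := n)) x
    have h2 : List.count x (wm v) = 1 := hv.2 x (by omega) (by omega)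
    omega
  · rw [wm_length hv, List.length_range']

lemma wm_nodup {n : ℕ} {v : Word} (hv : IsPerm n v) : (wm v).Nodup :=
  (List.Perm.nodup_iff (isPerm_perm hv)).mpr (List.nodup_range' (s := 1) (n := n))

lemma mem_wm {n : ℕ} {v : Word} (hv : IsPerm n v) {k : ℕ} :
    k ∈ wm v ↔ 1 ≤ k ∧ k ≤ n := by
  rw [(isPerm_perm hv).mem_iff, List.mem_range'_1]
  omega

lemma pos_bounds {n : ℕ} {v : Word} (hv : IsPerm n v) {k : ℕ} (h1 : 1 ≤ k) (h2 : k ≤ n) :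
    1 ≤ pos v k ∧ pos v k ≤ n := by
  have hmem : k ∈ wm v := (mem_wm hv).mpr ⟨h1, h2⟩
  have := List.idxOf_lt_length_iff.mpr hmem
  rw [wm_length hv] at this
  rw [pos_def]
  omega

lemma wm_getD_pos {n : ℕ} {v : Word} (hv : IsPerm n v) {k : ℕ} (h1 : 1 ≤ k) (h2 : k ≤ n) :
    (wm v).getD (pos v k - 1) 0 = k := by
  have hmem : k ∈ wm v := (mem_wm hv).mpr ⟨h1, h2⟩
  have hlt : (wm v).idxOf k < (wm v).length := List.idxOf_lt_length_iff.mpr hmem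
  have h5 := List.idxOf_get hlt
  simp only [List.get_eq_getElem] at h5
  simp only [pos_def, Nat.add_sub_cancel]
  rw [List.getD_eq_getElem _ _ hlt]
  exact h5

lemma pos_injOn {n : ℕ} {v : Word} (hv : IsPerm n v) {k k' : ℕ}
    (h1 : 1 ≤ k) (h2 : k ≤ n) (h1' : 1 ≤ k') (h2' : k' ≤ n)
    (h : pos v k = pos v k') : k = k' := by
  have hmem : k ∈ wm v := (mem_wm hv).mpr ⟨h1, h2⟩
  have hmem' : k' ∈ wm v := (mem_wm hv).mpr ⟨h1', h2'⟩
  rw [pos_def, pos_def] at h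
  exact (List.idxOf_inj hmem).mp (by omega)

lemma pos_image {n : ℕ} {v : Word} (hv : IsPerm n v) :
    (Finset.Icc 1 n).image (pos v) = Finset.Icc 1 n := by
  apply Finset.eq_of_subset_of_card_le
  · intro p hp
    obtain ⟨k, hk, rfl⟩ := Finset.mem_image.mp hp
    rw [Finset.mem_Icc] at hk ⊢
    exact pos_bounds hv hk.1 hk.2
  · rw [Finset.card_image_of_injOn]
    intro a ha b hb hab
    simp only [Finset.mem_coe, Finset.mem_Icc] at ha hb
    exact pos_injOn hv ha.1 ha.2 hb.1 hb.2 hab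

/-- target finset of positions, as integers -/
def A0 (n : ℕ) : Finset ℤ := (Finset.Icc 1 n).image (fun k : ℕ => (k : ℤ))

lemma A0_card (n : ℕ) : (A0 n).card = n := by
  rw [A0, Finset.card_image_of_injective _ Nat.cast_injective, Nat.card_Icc]
  omega

lemma mem_A0 {n : ℕ} {a : ℤ} : a ∈ A0 n ↔ ∃ k : ℕ, 1 ≤ k ∧ k ≤ n ∧ a = (k : ℤ) := by
  simp only [A0, Finset.mem_image, Finset.mem_Icc]
  constructor
  · rintro ⟨k, ⟨h1, h2⟩, rfl⟩; exact ⟨k, h1, h2, rfl⟩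
  · rintro ⟨k, h1, h2, rfl⟩; exact ⟨k, ⟨h1, h2⟩, rfl⟩

def psi (n : ℕ) (v : Word) : List ℤ := (List.range' 1 n).map (fun i => (pos v i : ℤ))

def csOf (n : ℕ) (u : Word) : List (Multiset ℕ) := (List.range' 1 (n-1)).map (iplus n u)

lemma psi_length (n : ℕ) (v : Word) : (psi n v).length = n := by
  rw [psi, List.length_map, List.length_range']

lemma csOf_length (n : ℕ) (u : Word) : (csOf n u).length = n - 1 := by
  rw [csOf, List.length_map, List.length_range']

lemma psi_getElem (n : ℕ) (v : Word) {i : ℕ} (hi : i < n)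
    (h : i < (psi n v).length) : (psi n v)[i] = (pos v (1 + i) : ℤ) := by
  simp only [psi, List.getElem_map, List.getElem_range']
  norm_num

lemma psi_getD (n : ℕ) (v : Word) {i : ℕ} (hi : i < n) :
    (psi n v).getD i 0 = (pos v (1 + i) : ℤ) := by
  have h : i < (psi n v).length := by rw [psi_length]; exact hi
  rw [List.getD_eq_getElem _ _ h, psi_getElem n v hi h]

lemma csOf_getD (n : ℕ) (u : Word) {i : ℕ} (hi : i < n - 1) :
    (csOf n u).getD i 0 = iplus n u (1 + i) := by
  have h : i < (csOf n u).length := by rw [csOf_length]; exact hi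
  rw [List.getD_eq_getElem _ _ h]
  simp only [csOf, List.getElem_map, List.getElem_range']
  norm_num

lemma psi_nodup {n : ℕ} {v : Word} (hv : IsPerm n v) : (psi n v).Nodup := by
  apply List.Nodup.map_on _ (List.nodup_range' (s := 1) (n := n))
  intro x hx y hy hxy
  rw [List.mem_range'_1] at hx hy
  exact pos_injOn hv (by omega) (by omega) (by omega) (by omega) (Nat.cast_injective hxy)

lemma range'_toFinset (n : ℕ) : (List.range' 1 n).toFinset = Finset.Icc 1 n := by
  ext x
  rw [List.mem_toFinset, List.mem_range'_1, Finset.mem_Icc]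
  omega

lemma list_toFinset_map (l : List ℕ) (f : ℕ → ℤ) :
    (l.map f).toFinset = l.toFinset.image f := by
  ext x
  simp [List.mem_toFinset, List.mem_map, Finset.mem_image]

lemma psi_toFinset {n : ℕ} {v : Word} (hv : IsPerm n v) : (psi n v).toFinset = A0 n := by
  rw [psi, list_toFinset_map, range'_toFinset]
  have : (fun i => (pos v i : ℤ)) = (fun k : ℕ => (k : ℤ)) ∘ (pos v) := rfl
  rw [this, ← Finset.image_image, pos_image hv, A0]

lemma natAbs_cast_dist (a b : ℕ) : ((a : ℤ) - (b : ℤ)).natAbs = Nat.dist a b := by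
  simp [Nat.dist]; omega

lemma micc_eq (a b : ℕ) : Multiset.Icc a b = ↑(List.range' a (b + 1 - a)) := by
  show (Finset.Icc a b).val = _
  rw [Nat.Icc_eq_range']

lemma distM_psi {n : ℕ} {v : Word} (hv : IsPerm n v) {t : ℕ} (h1 : 1 ≤ t) (h2 : t ≤ n) :
    distM ((pos v t : ℤ)) ↑((psi n v).drop t) = iplus n v t := by
  rw [psi, ← List.map_drop, range'_drop]
  rw [iplus, micc_eq]
  have hn : n + 1 - (t + 1) = n - t := by omega
  rw [hn]
  rw [distM, Multiset.map_coe, List.map_map, ← Multiset.map_coe]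
  have he : 1 + t = t + 1 := by omega
  rw [he]
  apply Multiset.map_congr rfl
  intro j _
  exact natAbs_cast_dist _ _

lemma cond_psi {n : ℕ} (hn : 1 ≤ n) {u v : Word} (hv : IsPerm n v) :
    Cond (csOf n u) (psi n v) ↔ (∀ i, 1 ≤ i → i ≤ n - 1 → iplus n v i = iplus n u i) := by
  rw [cond_iff (csOf n u) (psi n v) (by rw [psi_length, csOf_length]; omega)]
  rw [csOf_length]
  constructor
  · intro h i hi1 hi2
    have hh := h (i - 1) (by omega)
    rw [psi_getD n v (by omega), csOf_getD n u (by omega)] at hh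
    have he : 1 + (i - 1) = i := by omega
    have he2 : i - 1 + 1 = i := by omega
    rw [he, he2] at hh
    rw [← hh, distM_psi hv hi1 (by omega)]
  · intro h i hi
    have he : i + 1 = 1 + i := by omega
    rw [psi_getD n v (by omega), csOf_getD n u hi, he,
      distM_psi hv (by omega) (by omega)]
    exact h (1 + i) (by omega) (by omega)

lemma word_eq_of_pos_eq {n : ℕ} {v₁ v₂ : Word} (h1 : IsPerm n v₁) (h2 : IsPerm n v₂)
    (h : ∀ k, 1 ≤ k → k ≤ n → pos v₁ k = pos v₂ k) : v₁ = v₂ := by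
  have hwm : wm v₁ = wm v₂ := by
    apply List.ext_getElem (by rw [wm_length h1, wm_length h2])
    intro j hj1' hj2
    have hj1 : j < n := by rw [wm_length h1] at hj1'; exact hj1'
    have : (j + 1 : ℕ) ∈ (Finset.Icc 1 n).image (pos v₁) := by
      rw [pos_image h1, Finset.mem_Icc]; omega
    obtain ⟨k, hk, hpk⟩ := Finset.mem_image.mp this
    rw [Finset.mem_Icc] at hk
    have hpk2 : pos v₂ k = j + 1 := by rw [← h k hk.1 hk.2]; exact hpk
    have e1 : (wm v₁).getD j 0 = k := by
      have hh := wm_getD_pos h1 hk.1 hk.2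
      have hidx : pos v₁ k - 1 = j := by omega
      rw [hidx] at hh
      exact hh
    have e2 : (wm v₂).getD j 0 = k := by
      have hh := wm_getD_pos h2 hk.1 hk.2
      have hidx : pos v₂ k - 1 = j := by omega
      rw [hidx] at hh
      exact hh
    rw [← List.getD_eq_getElem _ 0 hj1', ← List.getD_eq_getElem _ 0 hj2, e1, e2]
  rw [wm_eq, wm_eq] at hwm
  exact List.map_injective_iff.mpr (fun a b hab => PNat.coe_injective hab) hwm

def phi (n : ℕ) (l : List ℤ) : Word :=
  (List.range n).map (fun j : ℕ => Nat.toPNat' (l.idxOf ((j : ℤ) + 1) + 1))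

section Phi

variable {n : ℕ} {l : List ℤ} (hnd : l.Nodup) (hfin : l.toFinset = A0 n)
  (hlen : l.length = n)

include hfin

lemma mem_l {a : ℤ} : a ∈ l ↔ ∃ k : ℕ, 1 ≤ k ∧ k ≤ n ∧ a = (k : ℤ) := by
  rw [← List.mem_toFinset, hfin, mem_A0]

lemma wm_phi : wm (phi n l) = (List.range n).map (fun j : ℕ => l.idxOf ((j : ℤ) + 1) + 1) := by
  rw [wm_eq, phi, List.map_map]
  apply List.map_congr_left
  intro j _
  simp [Nat.toPNat'_coe]

lemma wm_phi_length : (wm (phi n l)).length = n := by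
  rw [wm_phi hfin, List.length_map, List.length_range]

include hlen

lemma mem_l_cast {j : ℕ} (hj : j < n) : ((j : ℤ) + 1) ∈ l := by
  rw [mem_l hfin]
  exact ⟨j + 1, by omega, by omega, by push_cast; ring⟩

lemma idx_lt {j : ℕ} (hj : j < n) : l.idxOf ((j : ℤ) + 1) < n := by
  rw [← hlen]
  exact List.idxOf_lt_length_iff.mpr (mem_l_cast hfin hlen hj)

include hnd

lemma wm_phi_nodup : (wm (phi n l)).Nodup := by
  rw [wm_phi hfin]
  apply List.Nodup.map_on _ (List.nodup_range (n := n))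
  intro a ha b hb hab
  rw [List.mem_range] at ha hb
  have h1 := mem_l_cast hfin hlen ha
  have h2 := mem_l_cast hfin hlen hb
  have := (List.idxOf_inj (y := (b : ℤ) + 1) h1).mp (by omega)
  exact_mod_cast (by omega : (a : ℤ) = b)

lemma phi_spec {k : ℕ} (h1 : 1 ≤ k) (h2 : k ≤ n) :
    k ∈ wm (phi n l) ∧ (pos (phi n l) k : ℤ) = l.getD (k - 1) 0 := by
  have hk1 : k - 1 < l.length := by omega
  have ha : l.getD (k - 1) 0 = l[k - 1] := List.getD_eq_getElem _ _ hk1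
  have hamem : l.getD (k - 1) 0 ∈ l := by rw [ha]; exact List.getElem_mem hk1
  obtain ⟨mk, hmk1, hmk2, hmkeq⟩ := (mem_l hfin).mp hamem
  have hidxa : l.idxOf (l.getD (k - 1) 0) = k - 1 := by
    rw [ha]; exact indexOf_getElem hnd hk1
  have hj : mk - 1 < n := by omega
  have hcast : ((mk - 1 : ℕ) : ℤ) + 1 = (mk : ℤ) := by
    have : (1 : ℕ) ≤ mk := hmk1
    push_cast [this]
    ring
  have hwlen : (wm (phi n l)).length = n := wm_phi_length hfin
  have hgetD : (wm (phi n l)).getD (mk - 1) 0 = k := by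
    rw [wm_phi hfin, List.getD_eq_getElem _ _ (by rw [List.length_map, List.length_range]; omega)]
    simp only [List.getElem_map, List.getElem_range]
    rw [hcast, ← hmkeq, hidxa]
    omega
  have hgetElem : (wm (phi n l))[mk - 1]'(by omega) = k :=
    (List.getD_eq_getElem _ 0 (by omega)).symm.trans hgetD
  have hmem : k ∈ wm (phi n l) := by
    rw [← hgetElem]; exact List.getElem_mem _
  refine ⟨hmem, ?_⟩
  have hidx : (wm (phi n l)).idxOf k = mk - 1 := by
    conv_lhs => rw [← hgetElem]
    exact indexOf_getElem (wm_phi_nodup hnd hfin hlen) (by omega)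
  rw [pos_def, hidx, hmkeq]
  congr 1
  omega

lemma isPerm_phi : IsPerm n (phi n l) := by
  constructor
  · show (phi n l).length = n
    rw [phi, List.length_map, List.length_range]
  · intro k h1 h2
    show (wm (phi n l)).count k = 1
    exact count_eq_one_of_nodup_mem (wm_phi_nodup hnd hfin hlen)
      (phi_spec hnd hfin hlen h1 h2).1

lemma psi_phi : psi n (phi n l) = l := by
  apply List.ext_getElem (by rw [psi_length, hlen])
  intro i hi1 hi2
  have hi : i < n := by rw [psi_length] at hi1; exact hi1
  rw [psi_getElem n _ hi hi1]
  have := (phi_spec hnd hfin hlen (k := 1 + i) (by omega) (by omega)).2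
  rw [this]
  have he : 1 + i - 1 = i := by omega
  rw [he, List.getD_eq_getElem _ _ hi2]

end Phi

lemma u_mem_self {n : ℕ} {u : Word} (hu : IsPerm n u) :
    u ∈ {v : Word | IsPerm n v ∧ CrossEq n u v} :=
  ⟨hu, fun _ _ _ => rfl⟩

theorem main_count {n : ℕ} (hn : 1 ≤ n) (u : Word) (hu : IsPerm n u) :
    {v : Word | IsPerm n v ∧ CrossEq n u v}.ncard = (LL (csOf n u) (A0 n)).card := by
  set S := {v : Word | IsPerm n v ∧ CrossEq n u v} with hS
  have hcard : (A0 n).card = (csOf n u).length + 1 := by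
    rw [A0_card, csOf_length]; omega
  have hforward : ∀ v ∈ S, psi n v ∈ LL (csOf n u) (A0 n) := by
    intro v hv
    rw [mem_LL _ _ _ hcard]
    exact ⟨psi_nodup hv.1, psi_toFinset hv.1,
      (cond_psi hn hv.1).mpr (fun i hi1 hi2 => (hv.2 i hi1 hi2).symm)⟩
  have himg : psi n '' S = ↑(LL (csOf n u) (A0 n)) := by
    apply Set.eq_of_subset_of_subset
    · rintro _ ⟨v, hv, rfl⟩
      exact hforward v hv
    · intro l hl
      have hl' : l ∈ LL (csOf n u) (A0 n) := hl
      obtain ⟨hnd, hfin, hcond⟩ := (mem_LL _ _ _ hcard).mp hl'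
      have hlen : l.length = n := by
        rw [← List.toFinset_card_of_nodup hnd, hfin, A0_card]
      have hvperm : IsPerm n (phi n l) := isPerm_phi hnd hfin hlen
      have hpsiphi : psi n (phi n l) = l := psi_phi hnd hfin hlen
      have hcond' : Cond (csOf n u) (psi n (phi n l)) := by rw [hpsiphi]; exact hcond
      have hcross : CrossEq n u (phi n l) := by
        intro i hi1 hi2
        exact ((cond_psi hn hvperm).mp hcond' i hi1 hi2).symm
      exact ⟨phi n l, ⟨hvperm, hcross⟩, hpsiphi⟩
  have hinj : Set.InjOn (psi n) S := by
    intro v₁ hv₁ v₂ hv₂ heq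
    apply word_eq_of_pos_eq hv₁.1 hv₂.1
    intro k h1 h2
    have e1 : (psi n v₁).getD (k - 1) 0 = (psi n v₂).getD (k - 1) 0 := by rw [heq]
    rw [psi_getD n v₁ (by omega), psi_getD n v₂ (by omega)] at e1
    have he : 1 + (k - 1) = k := by omega
    rw [he] at e1
    exact_mod_cast e1
  rw [← Set.ncard_image_of_injOn hinj, himg, Set.ncard_coe_finset]

end CrossGlue


/-- the cardinality of a cross equivalence class is a power of 2. -/
theorem crossEq_class_card_pow_two (n : ℕ) (u : Word) (hu : IsPerm n u) :
    ∃ k : ℕ, {v : Word | IsPerm n v ∧ CrossEq n u v}.ncard = 2 ^ k := by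
  rcases Nat.eq_zero_or_pos n with hn | hn
  · subst hn
    have hset : {v : Word | IsPerm 0 v ∧ CrossEq 0 u v} = {([] : Word)} := by
      ext v
      simp only [Set.mem_setOf_eq, Set.mem_singleton_iff]
      constructor
      · rintro ⟨⟨hlen, -⟩, -⟩
        exact List.length_eq_zero_iff.mp hlen
      · rintro rfl
        refine ⟨⟨rfl, fun k h1 h2 => by omega⟩, fun i h1 h2 => ?_⟩
        exact absurd (h1.trans h2) (by norm_num)
    rw [hset, Set.ncard_singleton]
    exact ⟨0, rfl⟩
  · rw [CrossGlue.main_count hn u hu]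
    rcases CrossCore.LL_card_pow (CrossGlue.csOf n u) (CrossGlue.A0 n) with h0 | hpow
    · exfalso
      have hmem : CrossGlue.psi n u ∈ CrossCore.LL (CrossGlue.csOf n u) (CrossGlue.A0 n) := by
        rw [CrossCore.mem_LL _ _ _ (by rw [CrossGlue.A0_card, CrossGlue.csOf_length]; omega)]
        exact ⟨CrossGlue.psi_nodup hu, CrossGlue.psi_toFinset hu,
          (CrossGlue.cond_psi hn hu).mpr (fun i _ _ => rfl)⟩
      have := Finset.card_pos.mpr ⟨_, hmem⟩
      omega
    · exact hpow
end
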